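/- arXiv:2108.02101 — 8 statements merged into one kernel-verified Lean document; each statement's English description precedes it below -/
import Mathlib

section
/- If P[X > t] ≤ P[Y > t]/p for all real t with p ∈ (0,1], then there exists a coupling of X and Y such that P[X ≤ Y | X] ≥ p almost surely. -/
open MeasureTheory ProbabilityTheory Set Filter Topology

noncomputable def qf (μ : Measure ℝ) (u : ℝ) : ℝ := sInf {x | u ≤ cdf μ x}

section qf
variable (μ : Measure ℝ) [IsProbabilityMeasure μ]

omit [IsProbabilityMeasure μ] in
lemma qf_set_nonempty {u : ℝ} (hu : u < 1) : {x | u ≤ cdf μ x}.Nonempty :=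
  (tendsto_cdf_atTop (μ := μ)).eventually (eventually_ge_nhds hu) |>.exists

omit [IsProbabilityMeasure μ] in
lemma qf_set_bddBelow {u : ℝ} (hu : 0 < u) : BddBelow {x | u ≤ cdf μ x} := by
  obtain ⟨x₀, hx₀⟩ := (eventually_atBot.mp
    (((tendsto_cdf_atBot (μ := μ))).eventually (eventually_lt_nhds hu)))
  refine ⟨x₀, fun y hy => ?_⟩
  by_contra hc
  exact absurd hy (not_le.mpr (hx₀ y (le_of_not_ge hc)))

omit [IsProbabilityMeasure μ] in
lemma qf_le_iff {u : ℝ} (hu : u ∈ Ioo (0:ℝ) 1) {x : ℝ} :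
    qf μ u ≤ x ↔ u ≤ cdf μ x := by
  constructor
  · intro hx
    have key : u ≤ cdf μ (qf μ u) := by
      have hgt : ∀ y ∈ Ioi (qf μ u), u ≤ cdf μ y := by
        intro y hy
        obtain ⟨z, hz, hzy⟩ := exists_lt_of_csInf_lt (qf_set_nonempty μ hu.2) hy
        exact hz.trans ((cdf μ).mono hzy.le)
      have htd : Tendsto (cdf μ) (nhdsWithin (qf μ u) (Ioi (qf μ u))) (nhds (cdf μ (qf μ u))) :=
        ((cdf μ).right_continuous _).mono_left (nhdsWithin_mono _ Ioi_subset_Ici_self)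
      exact ge_of_tendsto htd (eventually_nhdsWithin_of_forall hgt)
    exact key.trans ((cdf μ).mono hx)
  · intro hx
    exact csInf_le (qf_set_bddBelow μ hu.1) hx

omit [IsProbabilityMeasure μ] in
lemma qf_of_nonpos {u : ℝ} (hu : u ≤ 0) : qf μ u = 0 := by
  have : {x | u ≤ cdf μ x} = univ := eq_univ_of_forall fun x => hu.trans (cdf_nonneg μ x)
  rw [qf, this]
  exact Real.sInf_of_not_bddBelow fun ⟨b, hb⟩ =>
    absurd (hb (mem_univ (b - 1))) (by simp)

omit [IsProbabilityMeasure μ] in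
lemma qf_of_one_lt {u : ℝ} (hu : 1 < u) : qf μ u = 0 := by
  have : {x | u ≤ cdf μ x} = ∅ := eq_empty_of_forall_notMem fun x hx =>
    absurd (hx.trans (cdf_le_one μ x)) (not_le.mpr hu)
  rw [qf, this, Real.sInf_empty]

omit [IsProbabilityMeasure μ] in
lemma qf_mono {u v : ℝ} (hu : 0 < u) (hv : v < 1) (huv : u ≤ v) : qf μ u ≤ qf μ v :=
  csInf_le_csInf (qf_set_bddBelow μ hu) (qf_set_nonempty μ hv)
    (fun x hx => huv.trans hx)

omit [IsProbabilityMeasure μ] in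
lemma measurable_qf : Measurable (qf μ) := by
  apply measurable_of_Iic
  intro x
  have hdecomp : qf μ ⁻¹' Iic x =
      (qf μ ⁻¹' Iic x ∩ Iic 0) ∪ (qf μ ⁻¹' Iic x ∩ Ioo 0 1) ∪
      (qf μ ⁻¹' Iic x ∩ {1}) ∪ (qf μ ⁻¹' Iic x ∩ Ioi 1) := by
    rw [← inter_union_distrib_left, ← inter_union_distrib_left, ← inter_union_distrib_left]
    have : ((Iic (0:ℝ) ∪ Ioo 0 1) ∪ {1}) ∪ Ioi 1 = univ := by
      apply eq_univ_of_forall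
      intro u
      rcases le_or_gt u 0 with h | h
      · exact Or.inl (Or.inl (Or.inl h))
      rcases lt_trichotomy u 1 with h1 | h1 | h1
      · exact Or.inl (Or.inl (Or.inr ⟨h, h1⟩))
      · exact Or.inl (Or.inr h1)
      · exact Or.inr h1
    rw [this, inter_univ]
  rw [hdecomp]
  have h1 : MeasurableSet (qf μ ⁻¹' Iic x ∩ Iic 0) := by
    rcases le_or_gt 0 x with hx | hx
    · have : qf μ ⁻¹' Iic x ∩ Iic 0 = Iic 0 :=
        inter_eq_self_of_subset_right fun u hu => by
          simp only [mem_preimage, mem_Iic]; rw [qf_of_nonpos μ hu]; exact hx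
      rw [this]; exact measurableSet_Iic
    · have : qf μ ⁻¹' Iic x ∩ Iic 0 = ∅ := by
        ext u; simp only [mem_inter_iff, mem_preimage, mem_Iic, mem_empty_iff_false,
          iff_false, not_and]
        intro hu hu0; rw [qf_of_nonpos μ hu0] at hu; linarith
      rw [this]; exact MeasurableSet.empty
  have h2 : MeasurableSet (qf μ ⁻¹' Iic x ∩ Ioo 0 1) := by
    apply Set.OrdConnected.measurableSet
    constructor
    intro u hu v hv w hw
    refine ⟨?_, ⟨hu.2.1.trans_le hw.1, hw.2.trans_lt hv.2.2⟩⟩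
    simp only [mem_preimage, mem_Iic] at hv ⊢
    exact (qf_mono μ (hu.2.1.trans_le hw.1) hv.2.2 hw.2).trans hv.1
  have h3 : MeasurableSet (qf μ ⁻¹' Iic x ∩ {1}) :=
    (Set.Subsingleton.measurableSet (fun a ha b hb => by
      rw [ha.2, hb.2]) : MeasurableSet _)
  have h4 : MeasurableSet (qf μ ⁻¹' Iic x ∩ Ioi 1) := by
    rcases le_or_gt 0 x with hx | hx
    · have : qf μ ⁻¹' Iic x ∩ Ioi 1 = Ioi 1 :=
        inter_eq_self_of_subset_right fun u hu => by
          simp only [mem_preimage, mem_Iic]; rw [qf_of_one_lt μ hu]; exact hx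
      rw [this]; exact measurableSet_Ioi
    · have : qf μ ⁻¹' Iic x ∩ Ioi 1 = ∅ := by
        ext u; simp only [mem_inter_iff, mem_preimage, mem_Iic, mem_empty_iff_false,
          iff_false, not_and]
        intro hu hu1; rw [qf_of_one_lt μ hu1] at hu; linarith
      rw [this]; exact MeasurableSet.empty
  exact ((h1.union h2).union h3).union h4

lemma map_qf : (volume.restrict (Ioo (0:ℝ) 1)).map (qf μ) = μ := by
  haveI : IsProbabilityMeasure (volume.restrict (Ioo (0:ℝ) 1)) :=
    ⟨by simp [Real.volume_Ioo]⟩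
  haveI : IsProbabilityMeasure ((volume.restrict (Ioo (0:ℝ) 1)).map (qf μ)) :=
    Measure.isProbabilityMeasure_map (measurable_qf μ).aemeasurable
  apply Measure.ext_of_Iic
  intro x
  rw [Measure.map_apply (measurable_qf μ) measurableSet_Iic,
    Measure.restrict_apply (measurable_qf μ measurableSet_Iic)]
  have hset : qf μ ⁻¹' Iic x ∩ Ioo 0 1 = Ioo 0 1 ∩ Iic (cdf μ x) := by
    ext u
    simp only [mem_inter_iff, mem_preimage, mem_Iic, mem_Ioo]
    constructor
    · rintro ⟨hq, hu⟩; exact ⟨hu, (qf_le_iff μ hu).mp hq⟩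
    · rintro ⟨hu, hq⟩; exact ⟨(qf_le_iff μ hu).mpr hq, hu⟩
  rw [hset, ← ofReal_cdf]
  have h0 : (0:ℝ) ≤ cdf μ x := cdf_nonneg μ x
  rcases lt_or_ge (cdf μ x) 1 with hc | hc
  · have : Ioo (0:ℝ) 1 ∩ Iic (cdf μ x) = Ioc 0 (cdf μ x) := by
      ext u
      simp only [mem_inter_iff, mem_Ioo, mem_Iic, mem_Ioc]
      exact ⟨fun ⟨⟨a, _⟩, b⟩ => ⟨a, b⟩, fun ⟨a, b⟩ => ⟨⟨a, b.trans_lt hc⟩, b⟩⟩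
    rw [this, Real.volume_Ioc, sub_zero]
  · have hc1 : cdf μ x = 1 := le_antisymm (cdf_le_one μ x) hc
    have : Ioo (0:ℝ) 1 ∩ Iic (cdf μ x) = Ioo 0 1 :=
      inter_eq_self_of_subset_left fun u hu => by
        simp only [mem_Iic]; rw [hc1]; exact hu.2.le
    rw [this, Real.volume_Ioo, hc1, sub_zero]

end qf

lemma aux_setint (π : Measure (ℝ × ℝ)) (B s : Set (ℝ × ℝ)) (hBm : MeasurableSet B) :
    ∫ z in s, B.indicator (fun _ => (1:ℝ)) z ∂π = (π (B ∩ s)).toReal := by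
  rw [integral_indicator hBm, setIntegral_const, smul_eq_mul, mul_one,
    measureReal_def, Measure.restrict_apply hBm]

/-- If `P[X > t] ≤ P[Y > t] / p` for all `t`, then there exists a coupling
(a joint law `π` with the given marginals) such that `P[X ≤ Y | X] ≥ p` a.s. -/
theorem stmt1 (μX μY : Measure ℝ) [IsProbabilityMeasure μX] [IsProbabilityMeasure μY]
    (p : ℝ) (hp : 0 < p) (hp1 : p ≤ 1)
    (h : ∀ t : ℝ, (μX {x | t < x}).toReal ≤ (μY {x | t < x}).toReal / p) :
    ∃ π : Measure (ℝ × ℝ), IsProbabilityMeasure π ∧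
      π.map Prod.fst = μX ∧ π.map Prod.snd = μY ∧
      ∀ᵐ z ∂π, p ≤
        (π[Set.indicator {w : ℝ × ℝ | w.1 ≤ w.2} (fun _ => (1 : ℝ)) |
          MeasurableSpace.comap Prod.fst inferInstance]) z := by
  -- notation
  set lam : Measure ℝ := volume.restrict (Ioo (0:ℝ) 1) with hlam
  haveI : IsProbabilityMeasure lam := ⟨by simp [hlam, Real.volume_Ioo]⟩
  set ψ : ℝ → ℝ := fun u => (1 - p) + p * u with hψ
  have hψm : Measurable ψ := by fun_prop
  have hQX : Measurable (qf μX) := measurable_qf μX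
  have hQY : Measurable (qf μY) := measurable_qf μY
  set T : ℝ → ℝ × ℝ := fun u => (qf μX u, qf μY (ψ u)) with hT
  have hTm : Measurable T := (hQX.prodMk (hQY.comp hψm))
  set γ : Measure (ℝ × ℝ) := lam.map T with hγ
  set ρ : Measure ℝ := (volume.restrict (Ioo (0:ℝ) (1 - p))).map (qf μY) with hρ
  set π : Measure (ℝ × ℝ) := ENNReal.ofReal p • γ + μX.prod ρ with hπ
  haveI : IsProbabilityMeasure γ := Measure.isProbabilityMeasure_map hTm.aemeasurable
  have hρuniv : ρ univ = ENNReal.ofReal (1 - p) := by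
    rw [hρ, Measure.map_apply hQY MeasurableSet.univ, preimage_univ,
      Measure.restrict_apply MeasurableSet.univ, univ_inter, Real.volume_Ioo, sub_zero]
  -- cdf inequality
  have hIoi : ∀ (μ : Measure ℝ) [IsProbabilityMeasure μ], ∀ t : ℝ,
      (μ {x | t < x}).toReal = 1 - cdf μ t := by
    intro μ _ t
    have : {x | t < x} = (Iic t)ᶜ := by ext y; simp [mem_compl_iff, not_le]
    rw [this, measure_compl measurableSet_Iic (measure_ne_top μ _), measure_univ,
      ENNReal.toReal_sub_of_le prob_le_one ENNReal.one_ne_top, ENNReal.toReal_one,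
      cdf_eq_real, measureReal_def]
  have hF : ∀ t : ℝ, cdf μY t ≤ (1 - p) + p * cdf μX t := by
    intro t
    have := h t
    rw [hIoi μX t, hIoi μY t, le_div_iff₀ hp] at this
    nlinarith
  -- key pointwise inequality
  have hkey : ∀ u ∈ Ioo (0:ℝ) 1, qf μX u ≤ qf μY (ψ u) := by
    intro u hu
    have hψu : ψ u ∈ Ioo (0:ℝ) 1 := by
      constructor
      · simp only [hψ]; nlinarith [hu.1, hu.2]
      · simp only [hψ]; nlinarith [hu.1, hu.2]
    have h1 : ψ u ≤ cdf μY (qf μY (ψ u)) := (qf_le_iff μY hψu).mp le_rfl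
    have h2 := hF (qf μY (ψ u))
    have h3 : u ≤ cdf μX (qf μY (ψ u)) := by
      simp only [hψ] at h1; nlinarith
    exact (qf_le_iff μX hu).mpr h3
  -- marginals of γ
  have hγ1 : γ.map Prod.fst = μX := by
    rw [hγ, Measure.map_map measurable_fst hTm]
    exact map_qf μX
  -- the rescaled ψ-image of lam
  have hmapψ : ENNReal.ofReal p • lam.map ψ = volume.restrict (Ioo (1 - p) 1) := by
    have hpre : ψ ⁻¹' Ioo (1 - p) 1 = Ioo 0 1 := by
      ext u
      simp only [mem_preimage, mem_Ioo, hψ]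
      constructor
      · rintro ⟨a, b⟩; constructor <;> nlinarith
      · rintro ⟨a, b⟩; constructor <;> nlinarith
    have hvol : volume.map ψ = ENNReal.ofReal p⁻¹ • volume := by
      have : ψ = (fun x => (1 - p) + x) ∘ (fun x => p * x) := by
        ext x; simp [hψ]
      rw [this, ← Measure.map_map (by fun_prop) (by fun_prop),
        Real.map_volume_mul_left (ne_of_gt hp), Measure.map_smul,
        Measure.IsAddLeftInvariant.map_add_left_eq_self (μ := volume) (1 - p), abs_of_pos (inv_pos.mpr hp)]
    rw [hlam, ← hpre, ← Measure.restrict_map hψm measurableSet_Ioo, hvol,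
      Measure.restrict_smul, smul_smul, ← ENNReal.ofReal_mul hp.le,
      mul_inv_cancel₀ (ne_of_gt hp), ENNReal.ofReal_one, one_smul]
  have hγ2 : ENNReal.ofReal p • γ.map Prod.snd = (volume.restrict (Ioo (1 - p) 1)).map (qf μY) := by
    rw [hγ, Measure.map_map measurable_snd hTm]
    have : (Prod.snd ∘ T) = qf μY ∘ ψ := rfl
    rw [this, ← Measure.map_map hQY hψm, ← Measure.map_smul, hmapψ]
  -- marginal fst of π
  have hprodfst : (μX.prod ρ).map Prod.fst = ρ univ • μX := by
    apply Measure.ext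
    intro s hs
    rw [Measure.map_apply measurable_fst hs]
    have : Prod.fst ⁻¹' s = s ×ˢ (univ : Set ℝ) := by
      ext z; simp [Set.mem_prod]
    rw [this, Measure.prod_prod, Measure.smul_apply, smul_eq_mul, mul_comm]
  have hprodsnd : (μX.prod ρ).map Prod.snd = ρ := by
    apply Measure.ext
    intro s hs
    rw [Measure.map_apply measurable_snd hs]
    have : Prod.snd ⁻¹' s = (univ : Set ℝ) ×ˢ s := by
      ext z; simp [Set.mem_prod]
    rw [this, Measure.prod_prod, measure_univ, one_mul]
  have hπfst : π.map Prod.fst = μX := by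
    rw [hπ, Measure.map_add _ _ measurable_fst, Measure.map_smul, hγ1, hprodfst, hρuniv,
      ← add_smul, ← ENNReal.ofReal_add hp.le
      (by linarith), add_sub_cancel, ENNReal.ofReal_one, one_smul]
  have hπsnd : π.map Prod.snd = μY := by
    rw [hπ, Measure.map_add _ _ measurable_snd, Measure.map_smul, hγ2, hprodsnd, hρ,
      ← Measure.map_add _ _ hQY, ← Measure.restrict_union
        (Set.disjoint_left.mpr (fun u hu hu' => absurd hu.1 (not_lt.mpr hu'.2.le)))
        measurableSet_Ioo]
    have hae : (Ioo (1 - p) 1 ∪ Ioo 0 (1 - p) : Set ℝ) =ᵐ[volume] Ioo (0:ℝ) 1 := by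
      rw [MeasureTheory.ae_eq_set]
      constructor
      · have : (Ioo (1 - p) 1 ∪ Ioo 0 (1 - p) : Set ℝ) \ Ioo 0 1 = ∅ := by
          rw [diff_eq_empty]
          rintro u (hu | hu)
          · exact ⟨by linarith [hu.1], hu.2⟩
          · exact ⟨hu.1, by linarith [hu.2]⟩
        rw [this]; exact measure_empty
      · refine measure_mono_null (t := ({1 - p} : Set ℝ)) (fun u hu => ?_) Real.volume_singleton
        rcases hu with ⟨hu1, hu2⟩
        simp only [mem_union, mem_Ioo, not_or, not_and, not_lt] at hu2
        rcases lt_trichotomy u (1 - p) with hc | hc | hc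
        · exact absurd (hu2.2 hu1.1) (not_le.mpr hc)
        · exact hc
        · exact absurd (hu2.1 hc) (not_le.mpr hu1.2)
    rw [Measure.restrict_congr_set hae]
    exact map_qf μY
  -- probability measure
  have hπuniv : π univ = 1 := by
    rw [hπ, Measure.add_apply, Measure.smul_apply, measure_univ, ← univ_prod_univ,
      Measure.prod_prod, measure_univ, hρuniv, smul_eq_mul, mul_one, one_mul,
      ← ENNReal.ofReal_add hp.le (by linarith), add_sub_cancel, ENNReal.ofReal_one]
  haveI hπprob : IsProbabilityMeasure π := ⟨hπuniv⟩
  -- γ is supported on {x ≤ y}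
  set B : Set (ℝ × ℝ) := {w : ℝ × ℝ | w.1 ≤ w.2} with hB
  have hBm : MeasurableSet B := measurableSet_le measurable_fst measurable_snd
  have hγsupp : γ Bᶜ = 0 := by
    rw [hγ, Measure.map_apply hTm hBm.compl, hlam,
      Measure.restrict_apply (hTm hBm.compl)]
    refine measure_mono_null (t := (∅ : Set ℝ)) (fun u hu => ?_) measure_empty
    exact absurd (hkey u hu.2) hu.1
  -- set-integral inequality
  set f : ℝ × ℝ → ℝ := Set.indicator B (fun _ => (1:ℝ)) with hf
  have hγs : ∀ A : Set ℝ, MeasurableSet A → γ (Prod.fst ⁻¹' A) = μX A := by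
    intro A hA
    rw [← hγ1, Measure.map_apply measurable_fst hA]
  have hπs : ∀ A : Set ℝ, MeasurableSet A → π (Prod.fst ⁻¹' A) = μX A := by
    intro A hA
    have : Prod.fst ⁻¹' A = A ×ˢ (univ : Set ℝ) := by ext z; simp [Set.mem_prod]
    rw [hπ, Measure.add_apply, Measure.smul_apply, hγs A hA, this, Measure.prod_prod,
      hρuniv, smul_eq_mul, mul_comm (μX A), ← add_mul, ← ENNReal.ofReal_add hp.le (by linarith),
      add_sub_cancel, ENNReal.ofReal_one, one_mul]
  have hsetint : ∀ A : Set ℝ, MeasurableSet A →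
      p * (π (Prod.fst ⁻¹' A)).toReal ≤ ∫ z in Prod.fst ⁻¹' A, f z ∂π := by
    intro A hA
    have hs : MeasurableSet ((Prod.fst : ℝ × ℝ → ℝ) ⁻¹' A) := measurable_fst hA
    have hint : ∫ z in Prod.fst ⁻¹' A, f z ∂π = (π (B ∩ Prod.fst ⁻¹' A)).toReal := by
      exact aux_setint π B (Prod.fst ⁻¹' A) hBm
    have hBs : γ (B ∩ Prod.fst ⁻¹' A) = γ (Prod.fst ⁻¹' A) := by
      refine le_antisymm (measure_mono inter_subset_right) ?_
      calc γ (Prod.fst ⁻¹' A) ≤ γ (B ∩ Prod.fst ⁻¹' A) + γ Bᶜ := by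
            refine (measure_mono (fun z hz => ?_)).trans (measure_union_le _ _)
            by_cases hzB : z ∈ B
            · exact Or.inl ⟨hzB, hz⟩
            · exact Or.inr hzB
        _ = γ (B ∩ Prod.fst ⁻¹' A) := by rw [hγsupp, add_zero]
    have hlow : ENNReal.ofReal p * μX A ≤ π (B ∩ Prod.fst ⁻¹' A) := by
      calc ENNReal.ofReal p * μX A = ENNReal.ofReal p * γ (B ∩ Prod.fst ⁻¹' A) := by
            rw [hBs, hγs A hA]
        _ ≤ π (B ∩ Prod.fst ⁻¹' A) := by
            rw [hπ, Measure.add_apply, Measure.smul_apply, smul_eq_mul]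
            exact le_self_add
    rw [hint, hπs A hA]
    calc p * (μX A).toReal = (ENNReal.ofReal p * μX A).toReal := by
          rw [ENNReal.toReal_mul, ENNReal.toReal_ofReal hp.le]
      _ ≤ (π (B ∩ Prod.fst ⁻¹' A)).toReal :=
          ENNReal.toReal_mono (measure_ne_top π _) hlow
  -- conditional expectation
  refine ⟨π, hπprob, hπfst, hπsnd, ?_⟩
  have hm : MeasurableSpace.comap (Prod.fst : ℝ × ℝ → ℝ) inferInstance ≤
      Prod.instMeasurableSpace := measurable_fst.comap_le
  haveI : IsFiniteMeasure (π.trim hm) :=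
    ⟨by rw [trim_measurableSet_eq hm MeasurableSet.univ]; exact measure_lt_top π univ⟩
  have hfi : Integrable f π := (integrable_const (1:ℝ)).indicator hBm
  have hsm : StronglyMeasurable[MeasurableSpace.comap (Prod.fst : ℝ × ℝ → ℝ) inferInstance]
      (fun z => (π[f|MeasurableSpace.comap (Prod.fst : ℝ × ℝ → ℝ) inferInstance]) z - p) :=
    stronglyMeasurable_condExp.sub stronglyMeasurable_const
  have hint : Integrable
      (fun z => (π[f|MeasurableSpace.comap (Prod.fst : ℝ × ℝ → ℝ) inferInstance]) z - p) π :=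
    integrable_condExp.sub (integrable_const p)
  have hkey2 : ∀ s : Set (ℝ × ℝ),
      MeasurableSet[MeasurableSpace.comap (Prod.fst : ℝ × ℝ → ℝ) inferInstance] s →
      0 ≤ ∫ z in s, ((π[f|MeasurableSpace.comap (Prod.fst : ℝ × ℝ → ℝ) inferInstance]) z - p) ∂π := by
    intro s hs
    obtain ⟨A, hA, rfl⟩ := hs
    have hsint : ∫ z in Prod.fst ⁻¹' A,
        ((π[f|MeasurableSpace.comap (Prod.fst : ℝ × ℝ → ℝ) inferInstance]) z - p) ∂π =
        (∫ z in Prod.fst ⁻¹' A, f z ∂π) - p * (π (Prod.fst ⁻¹' A)).toReal := by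
      rw [integral_sub integrable_condExp.integrableOn (integrable_const p).integrableOn]
      congr 1
      · exact setIntegral_condExp hm hfi ⟨A, hA, rfl⟩
      · rw [setIntegral_const, smul_eq_mul, mul_comm, measureReal_def]
    rw [hsint, sub_nonneg]
    exact hsetint A hA
  have htrim : (0 : ℝ × ℝ → ℝ) ≤ᵐ[π.trim hm]
      (fun z => (π[f|MeasurableSpace.comap (Prod.fst : ℝ × ℝ → ℝ) inferInstance]) z - p) := by
    refine ae_nonneg_of_forall_setIntegral_nonneg (hint.trim hm hsm) ?_
    intro s hs _
    rw [restrict_trim hm π hs, ← integral_trim hm hsm]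
    exact hkey2 s hs
  have hae2 : (0 : ℝ × ℝ → ℝ) ≤ᵐ[π]
      (fun z => (π[f|MeasurableSpace.comap (Prod.fst : ℝ × ℝ → ℝ) inferInstance]) z - p) :=
    ae_of_ae_trim hm htrim
  filter_upwards [hae2] with z hz
  have hz' : (0:ℝ) ≤ (π[f|MeasurableSpace.comap (Prod.fst : ℝ × ℝ → ℝ) inferInstance]) z - p := hz
  linarith
end

section
/- Suppose X is a nonnegative random variable with E[X^β] = α/β, where β − α = 1, and its (α,β)-generalized equilibrium transform X* satisfies P[X* > t] ≤ P[X > t]/p for all t. Then for all t ≥ 0 with P[X > t] > 0: E[X − t | X > t] ≤ 1/(p β t^α). -/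
open MeasureTheory

/-- The law of `V_a`, with density `a x^(a-1)` on `(0,1]`. -/
noncomputable def vLaw (a : ℝ) : Measure ℝ :=
  (volume.restrict (Set.Ioc (0 : ℝ) 1)).withDensity
    (fun u => ENNReal.ofReal (a * u ^ (a - 1)))

/-- The `β`-power bias of a law `μ`. -/
noncomputable def powerBias (β : ℝ) (μ : Measure ℝ) : Measure ℝ :=
  μ.withDensity (fun x => ENNReal.ofReal (x ^ β / ∫ y, y ^ β ∂μ))

/-- The `(α,β)`-generalized equilibrium transform of `μ`: the law of `V_α · X^(β)`. -/
noncomputable def eqLaw (α β : ℝ) (μ : Measure ℝ) : Measure ℝ :=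
  ((vLaw α).prod (powerBias β μ)).map (fun p => p.1 * p.2)

instance (a : ℝ) : SFinite (vLaw a) := by unfold vLaw; infer_instance

instance (β : ℝ) (μ : Measure ℝ) [SFinite μ] : SFinite (powerBias β μ) := by
  unfold powerBias; infer_instance

/-- Lower bound for the tail of `vLaw` scaled by `v`. -/
lemma vlaw_lb {α t v : ℝ} (hα : 0 < α) (ht : 0 ≤ t) (hv : 0 < v) :
    ENNReal.ofReal (1 - (t/v) ^ α) ≤ vLaw α {u | t < u * v} := by
  have hs : 0 ≤ t / v := div_nonneg ht hv.le
  rcases le_or_gt 1 (t/v) with h1 | h1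
  · have h2 : (1:ℝ) ≤ (t/v) ^ α := Real.one_le_rpow h1 hα.le
    simp [ENNReal.ofReal_eq_zero.2 (by linarith : 1 - (t/v)^α ≤ 0)]
  · have hset : {u : ℝ | t < u * v} = Set.Ioi (t / v) := by
      ext u; simp [Set.mem_Ioi, div_lt_iff₀ hv]
    have hinter : Set.Ioi (t/v) ∩ Set.Ioc 0 1 = Set.Ioc (t/v) 1 := by
      ext u
      simp only [Set.mem_inter_iff, Set.mem_Ioi, Set.mem_Ioc]
      constructor
      · rintro ⟨h1, _, h3⟩; exact ⟨h1, h3⟩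
      · rintro ⟨h1, h2⟩; exact ⟨h1, lt_of_le_of_lt hs h1, h2⟩
    rw [vLaw, hset, withDensity_apply _ measurableSet_Ioi,
      Measure.restrict_restrict measurableSet_Ioi, hinter]
    have hInt : IntegrableOn (fun u => α * u ^ (α - 1)) (Set.Ioc (t/v) 1) volume := by
      have := (intervalIntegral.intervalIntegrable_rpow' (a := t/v) (b := 1)
        (by linarith : (-1:ℝ) < α - 1)).const_mul α
      rwa [intervalIntegrable_iff, Set.uIoc_of_le h1.le] at this
    have hval : ∫ u in Set.Ioc (t/v) 1, α * u ^ (α - 1) = 1 - (t/v) ^ α := by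
      rw [← intervalIntegral.integral_of_le h1.le, intervalIntegral.integral_const_mul,
        integral_rpow (Or.inl (by linarith : (-1:ℝ) < α - 1))]
      rw [sub_add_cancel, Real.one_rpow]
      field_simp
    calc ENNReal.ofReal (1 - (t/v)^α)
        = ENNReal.ofReal (∫ u in Set.Ioc (t/v) 1, α * u ^ (α-1)) := by rw [hval]
      _ ≤ ∫⁻ u in Set.Ioc (t/v) 1, ENNReal.ofReal (α * u ^ (α-1)) := by
          rw [← ofReal_integral_eq_lintegral_ofReal hInt ?_]
          filter_upwards [ae_restrict_mem measurableSet_Ioc] with u hu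
          exact mul_nonneg hα.le (Real.rpow_nonneg (le_trans hs hu.1.le) _)

/-- `vLaw` is a finite measure. -/
lemma vlaw_fin {α : ℝ} (hα : 0 < α) : vLaw α Set.univ ≠ ⊤ := by
  have hInt : IntegrableOn (fun u => α * u ^ (α - 1)) (Set.Ioc (0:ℝ) 1) volume := by
    have := (intervalIntegral.intervalIntegrable_rpow' (a := (0:ℝ)) (b := 1)
      (by linarith : (-1:ℝ) < α - 1)).const_mul α
    rwa [intervalIntegrable_iff, Set.uIoc_of_le zero_le_one] at this
  rw [vLaw, withDensity_apply _ MeasurableSet.univ, Measure.restrict_univ,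
    ← ofReal_integral_eq_lintegral_ofReal hInt ?_]
  · exact ENNReal.ofReal_ne_top
  · filter_upwards [ae_restrict_mem measurableSet_Ioc] with u hu
    exact mul_nonneg hα.le (Real.rpow_nonneg hu.1.le _)

/-- The power bias is a finite measure. -/
lemma pb_fin {μ : Measure ℝ} (β : ℝ)
    (hae : ∀ᵐ x ∂μ, 0 ≤ x)
    (hint : Integrable (fun x => x ^ β) μ)
    (hpos : 0 ≤ ∫ y, y ^ β ∂μ) :
    powerBias β μ Set.univ ≠ ⊤ := by
  rw [powerBias, withDensity_apply _ MeasurableSet.univ, Measure.restrict_univ,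
    ← ofReal_integral_eq_lintegral_ofReal (hint.div_const _) ?_]
  · exact ENNReal.ofReal_ne_top
  · filter_upwards [hae] with x hx
    exact div_nonneg (Real.rpow_nonneg hx _) hpos

/-- The key pointwise inequality, a consequence of Young's inequality. -/
lemma key_ineq {α β t v : ℝ} (hα : 0 < α) (hβ : 0 < β) (hαβ : β - α = 1)
    (ht : 0 ≤ t) (htv : t < v) :
    β * t ^ α * (v - t) ≤ v ^ β / (α / β) * (1 - (t / v) ^ α) := by
  have hv : 0 < v := lt_of_le_of_lt ht htv
  have hb : (0:ℝ) < v ^ α := Real.rpow_pos_of_pos hv α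
  have hvβ : v ^ β = v ^ α * v := by
    rw [show β = α + 1 by linarith, Real.rpow_add hv, Real.rpow_one]
  rcases eq_or_lt_of_le ht with rfl | ht0
  · rw [Real.zero_rpow hα.ne', zero_div, Real.zero_rpow hα.ne']
    have : (0:ℝ) ≤ v ^ β / (α / β) :=
      div_nonneg (Real.rpow_nonneg hv.le _) (div_nonneg hα.le hβ.le)
    simpa using this
  · have hconj : Real.HolderConjugate β (β / α) := by
      rw [Real.holderConjugate_iff]
      constructor
      · linarith
      · rw [inv_div]
        field_simp
        linarith
    have hy := Real.young_inequality_of_nonneg hv.le (Real.rpow_nonneg ht α) hconj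
    have h1 : ((t:ℝ) ^ α) ^ (β / α) = t ^ β := by
      rw [← Real.rpow_mul ht]
      congr 1
      field_simp
    have h2 : t ^ β = t ^ α * t := by
      rw [show β = α + 1 by linarith, Real.rpow_add ht0, Real.rpow_one]
    rw [h1] at hy
    have hy' : (α + 1) * (v * t ^ α) ≤ v ^ β + α * t ^ β := by
      rw [show α + 1 = β by linarith]
      have h3 : t ^ β / (β / α) = α * t ^ β / β := by
        rw [div_div_eq_mul_div]; ring
      rw [h3, ← add_div] at hy
      linarith [(le_div_iff₀ hβ).mp hy]
    have h2' : α * t ^ β = α * (t ^ α * t) := by rw [h2]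
    have hcore : α * t ^ α * (v - t) ≤ v ^ β - v * t ^ α := by linarith [hy', h2']
    have h3 : (t / v) ^ α = t ^ α / v ^ α := Real.div_rpow ht hv.le α
    have heq : v ^ β / (α / β) * (1 - (t / v) ^ α) = β / α * (v ^ β - v * t ^ α) := by
      rw [h3, hvβ]
      field_simp
    rw [heq]
    calc β * t ^ α * (v - t) = β / α * (α * t ^ α * (v - t)) := by field_simp
      _ ≤ β / α * (v ^ β - v * t ^ α) :=
          mul_le_mul_of_nonneg_left hcore (div_pos hβ hα).le

/-- If `β - α = 1`, `E[X^β] = α/β` and `X* ⪯_p X`, then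
`E[X - t | X > t] ≤ 1/(p β t^α)` for all `t ≥ 0` with `P[X > t] > 0`
(stated multiplied through by `p β t^α · P[X > t]`). -/
theorem stmt5 (μ : Measure ℝ) [IsProbabilityMeasure μ] (α β p : ℝ)
    (hα : 0 < α) (hβ : 0 < β) (hαβ : β - α = 1) (hp : 0 < p) (hp1 : p ≤ 1)
    (hsupp : μ (Set.Iio 0) = 0)
    (hint : Integrable (fun x => x ^ β) μ)
    (hmom : ∫ x, x ^ β ∂μ = α / β)
    (hstar : ∀ t : ℝ, (eqLaw α β μ {x | t < x}).toReal ≤ (μ {x | t < x}).toReal / p) :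
    ∀ t : ℝ, 0 ≤ t → 0 < (μ {x | t < x}).toReal →
      p * β * t ^ α * ∫ x in {x | t < x}, (x - t) ∂μ ≤ (μ {x | t < x}).toReal := by
  intro t ht hμt
  set S : Set ℝ := {x | t < x} with hSdef
  have hSm : MeasurableSet S := measurableSet_lt measurable_const measurable_id
  have hae : ∀ᵐ x ∂μ, 0 ≤ x := by
    rw [ae_iff]
    convert hsupp using 2
    ext x; simp [not_le]
  have hβ1 : (1:ℝ) ≤ β := by nlinarith
  -- integrability of the identity
  have hXint : Integrable (fun x : ℝ => x) μ := by
    refine ((integrable_const (1:ℝ)).add hint).mono' measurable_id.aestronglyMeasurable ?_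
    filter_upwards [hae] with x hx
    rw [Real.norm_eq_abs, abs_of_nonneg hx]
    show x ≤ 1 + x ^ β
    rcases le_or_gt x 1 with h | h
    · have : 0 ≤ x ^ β := Real.rpow_nonneg hx β
      linarith
    · have hxb : x ≤ x ^ β := by
        calc x = x ^ (1:ℝ) := (Real.rpow_one x).symm
        _ ≤ x ^ β := Real.rpow_le_rpow_of_exponent_le h.le hβ1
      linarith
  have hIOn : IntegrableOn (fun x => x - t) S μ :=
    (hXint.sub (integrable_const t)).integrableOn
  have hI0 : 0 ≤ ∫ x in S, (x - t) ∂μ := by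
    refine setIntegral_nonneg hSm fun x hx => ?_
    have : t < x := hx
    linarith
  -- the power bias with explicit density
  set f : ℝ → ENNReal := fun x => ENNReal.ofReal (x ^ β / (α / β)) with hfdef
  have hfm : Measurable f := by fun_prop
  have hgm : Measurable fun v : ℝ => ENNReal.ofReal (1 - (t/v) ^ α) := by fun_prop
  have hpb : powerBias β μ = μ.withDensity f := by rw [powerBias, hmom]
  -- a.e. positivity under the power bias
  have haeν : ∀ᵐ v ∂(powerBias β μ), 0 < v := by
    rw [ae_iff]
    have hset : {v : ℝ | ¬ 0 < v} = Set.Iic 0 := by ext v; simp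
    rw [hset, hpb, withDensity_apply _ measurableSet_Iic]
    have hae' : Set.Iic (0:ℝ) =ᵐ[μ] ({0} : Set ℝ) := by
      refine MeasureTheory.ae_eq_set.2 ⟨?_, ?_⟩
      · have : Set.Iic (0:ℝ) \ {0} = Set.Iio 0 := by
          ext x; simp only [Set.mem_diff, Set.mem_Iic, Set.mem_singleton_iff, Set.mem_Iio]
          constructor
          · rintro ⟨h1, h2⟩; exact lt_of_le_of_ne h1 h2
          · intro h; exact ⟨h.le, h.ne⟩
        rw [this]; exact hsupp
      · have : ({0} : Set ℝ) \ Set.Iic 0 = ∅ :=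
          Set.diff_eq_empty.2 (by intro x hx; simp_all)
        rw [this]; exact measure_empty
    rw [setLIntegral_congr hae', lintegral_singleton]
    simp [hfdef, Real.zero_rpow hβ.ne']
  have hmul : Measurable fun q : ℝ × ℝ => q.1 * q.2 := measurable_fst.mul measurable_snd
  -- slice formula for the equilibrium law
  have h1 : eqLaw α β μ S = ∫⁻ v, vLaw α {u | t < u * v} ∂(powerBias β μ) := by
    rw [eqLaw, Measure.map_apply hmul hSm, Measure.prod_apply_symm (hmul hSm)]
    rfl
  have h2 : ∫⁻ v, ENNReal.ofReal (1 - (t/v) ^ α) ∂(powerBias β μ) ≤ eqLaw α β μ S := by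
    rw [h1]
    refine lintegral_mono_ae ?_
    filter_upwards [haeν] with v hv
    exact vlaw_lb hα ht hv
  have h3 : ∫⁻ v, ENNReal.ofReal (1 - (t/v) ^ α) ∂(powerBias β μ)
      = ∫⁻ v, f v * ENNReal.ofReal (1 - (t/v) ^ α) ∂μ := by
    rw [hpb, lintegral_withDensity_eq_lintegral_mul μ hfm hgm]
    rfl
  have h4 : ∫⁻ v in S, ENNReal.ofReal (β * t ^ α * (v - t)) ∂μ
      ≤ ∫⁻ v, f v * ENNReal.ofReal (1 - (t/v) ^ α) ∂μ := by
    refine le_trans (setLIntegral_mono' hSm ?_) (setLIntegral_le_lintegral _ _)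
    intro v hv
    have htv : t < v := hv
    have h5 := key_ineq hα hβ hαβ ht htv
    calc ENNReal.ofReal (β * t ^ α * (v - t))
        ≤ ENNReal.ofReal (v ^ β / (α / β) * (1 - (t/v) ^ α)) := ENNReal.ofReal_le_ofReal h5
      _ = f v * ENNReal.ofReal (1 - (t/v) ^ α) := by
          rw [hfdef, ENNReal.ofReal_mul
            (div_nonneg (Real.rpow_nonneg (le_trans ht htv.le) β) (div_nonneg hα.le hβ.le))]
  have h5 : ENNReal.ofReal (β * t ^ α * ∫ x in S, (x - t) ∂μ)
      ≤ ∫⁻ v in S, ENNReal.ofReal (β * t ^ α * (v - t)) ∂μ := by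
    have hnn : 0 ≤ᵐ[μ.restrict S] fun x => β * t ^ α * (x - t) := by
      filter_upwards [ae_restrict_mem hSm] with x hx
      have hxt : t < x := hx
      have h0 : 0 ≤ t ^ α := Real.rpow_nonneg ht α
      have h1 : 0 ≤ x - t := by linarith
      positivity
    calc ENNReal.ofReal (β * t ^ α * ∫ x in S, (x - t) ∂μ)
        = ENNReal.ofReal (∫ x in S, β * t ^ α * (x - t) ∂μ) := by rw [integral_const_mul]
      _ = ∫⁻ v in S, ENNReal.ofReal (β * t ^ α * (v - t)) ∂μ :=
          ofReal_integral_eq_lintegral_ofReal (hIOn.const_mul _) hnn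
      _ ≤ _ := le_rfl
  -- finiteness of the equilibrium law
  have hfin : eqLaw α β μ S ≠ ⊤ := by
    refine ne_top_of_le_ne_top ?_ (measure_mono (Set.subset_univ S))
    rw [eqLaw, Measure.map_apply hmul MeasurableSet.univ, Set.preimage_univ,
      ← Set.univ_prod_univ, Measure.prod_prod]
    exact ENNReal.mul_ne_top (vlaw_fin hα)
      (pb_fin β hae hint (by rw [hmom]; positivity))
  have hkey : β * t ^ α * ∫ x in S, (x - t) ∂μ ≤ (eqLaw α β μ S).toReal := by
    rw [← ENNReal.ofReal_le_iff_le_toReal hfin]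
    exact h5.trans (h4.trans (h3 ▸ h2))
  calc p * β * t ^ α * ∫ x in S, (x - t) ∂μ
      = p * (β * t ^ α * ∫ x in S, (x - t) ∂μ) := by ring
    _ ≤ p * (eqLaw α β μ S).toReal := mul_le_mul_of_nonneg_left hkey hp.le
    _ ≤ p * ((μ S).toReal / p) := mul_le_mul_of_nonneg_left (hstar t) hp.le
    _ = (μ S).toReal := by field_simp
end

section
/- Suppose X is a nonnegative random variable with E[X^β] = α/β, where β − α = −1, and its (α,β)-generalized equilibrium transform X* satisfies P[X* > t] ≤ P[X > t]/p for all t. Then for all t ≥ 0 with P[X > t] > 0: E[X^{-1} − t^{-1} | X > t] ≥ −1/(p β t^α). -/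
open MeasureTheory

lemma vLaw_le (a : ℝ) (s : Set ℝ) (ha : 1 ≤ a) : vLaw a s ≤ ENNReal.ofReal a := by
  refine le_trans (measure_mono (Set.subset_univ s)) ?_
  rw [vLaw, withDensity_apply _ MeasurableSet.univ, Measure.restrict_univ]
  calc ∫⁻ u, ENNReal.ofReal (a * u ^ (a-1)) ∂(volume.restrict (Set.Ioc 0 1))
      ≤ ∫⁻ _, ENNReal.ofReal a ∂(volume.restrict (Set.Ioc (0:ℝ) 1)) := by
        apply lintegral_mono_ae
        filter_upwards [ae_restrict_mem measurableSet_Ioc] with u hu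
        apply ENNReal.ofReal_le_ofReal
        have : u ^ (a-1) ≤ 1 := Real.rpow_le_one hu.1.le hu.2 (by linarith)
        nlinarith
    _ = ENNReal.ofReal a * (volume.restrict (Set.Ioc (0:ℝ) 1)) Set.univ := lintegral_const _
    _ ≤ ENNReal.ofReal a := by
        rw [Measure.restrict_apply MeasurableSet.univ, Set.univ_inter, Real.volume_Ioc]
        simp

lemma vLaw_section_ge (a t x : ℝ) (ha : 1 ≤ a) (ht : 0 < t) (hx : t < x) :
    ENNReal.ofReal (a * (t / x) ^ (a - 1) * (1 - t / x)) ≤ vLaw a {u | t < u * x} := by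
  have hx0 : 0 < x := lt_trans ht hx
  have hr0 : 0 < t / x := div_pos ht hx0
  have hr1 : t / x < 1 := (div_lt_one hx0).mpr hx
  have hset : {u : ℝ | t < u * x} = Set.Ioi (t / x) := by
    ext u; simp [Set.mem_Ioi, div_lt_iff₀ hx0]
  rw [vLaw, hset, withDensity_apply _ measurableSet_Ioi,
    Measure.restrict_restrict measurableSet_Ioi]
  have hset2 : Set.Ioi (t/x) ∩ Set.Ioc 0 1 = Set.Ioc (t/x) 1 := by
    ext u; constructor
    · rintro ⟨h1, _, h3⟩; exact ⟨h1, h3⟩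
    · rintro ⟨h1, h2⟩; exact ⟨h1, lt_trans hr0 h1, h2⟩
  rw [hset2]
  calc ENNReal.ofReal (a * (t / x) ^ (a - 1) * (1 - t / x))
      = ENNReal.ofReal (a * (t / x) ^ (a - 1)) * ENNReal.ofReal (1 - t / x) := by
        rw [← ENNReal.ofReal_mul (by positivity)]
    _ = ENNReal.ofReal (a * (t / x) ^ (a - 1)) * volume (Set.Ioc (t/x) 1) := by
        rw [Real.volume_Ioc]
    _ = ∫⁻ _ in Set.Ioc (t/x) 1, ENNReal.ofReal (a * (t / x) ^ (a - 1)) := by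
        rw [setLIntegral_const]
    _ ≤ ∫⁻ u in Set.Ioc (t/x) 1, ENNReal.ofReal (a * u ^ (a - 1)) := by
        apply lintegral_mono_ae
        filter_upwards [ae_restrict_mem measurableSet_Ioc] with u hu
        apply ENNReal.ofReal_le_ofReal
        have h5 : (t/x) ^ (a-1) ≤ u ^ (a-1) :=
          Real.rpow_le_rpow hr0.le hu.1.le (by linarith)
        nlinarith

/-- If `α - β = 1`, `E[X^β] = α/β` and `X* ⪯_p X`, then
`E[X⁻¹ - t⁻¹ | X > t] ≥ -1/(p β t^α)` for all `t ≥ 0` with `P[X > t] > 0`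
(stated multiplied through by `P[X > t]`). -/
theorem stmt6 (μ : Measure ℝ) [IsProbabilityMeasure μ] (α β p : ℝ)
    (hα : 0 < α) (hβ : 0 < β) (hαβ : α - β = 1) (hp : 0 < p) (hp1 : p ≤ 1)
    (hsupp : μ (Set.Iio 0) = 0)
    (hint : Integrable (fun x => x ^ β) μ)
    (hmom : ∫ x, x ^ β ∂μ = α / β)
    (hstar : ∀ t : ℝ, (eqLaw α β μ {x | t < x}).toReal ≤ (μ {x | t < x}).toReal / p) :
    ∀ t : ℝ, 0 ≤ t → 0 < (μ {x | t < x}).toReal →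
      -((μ {x | t < x}).toReal / (p * β * t ^ α))
        ≤ ∫ x in {x | t < x}, (x⁻¹ - t⁻¹) ∂μ := by
  intro t ht hμt
  have hS : MeasurableSet {x : ℝ | t < x} := measurableSet_Ioi
  rcases eq_or_lt_of_le ht with h0 | ht0
  · -- t = 0 case
    subst h0
    have h1 : (0:ℝ) ^ α = 0 := Real.zero_rpow hα.ne'
    rw [h1]
    rw [mul_zero, div_zero, neg_zero]
    apply setIntegral_nonneg hS
    intro x hx
    simp only [Set.mem_setOf_eq] at hx
    rw [inv_zero, sub_zero]
    positivity
  · -- main case t > 0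
    set S := {x : ℝ | t < x} with hSdef
    -- the key lintegral lower bound
    have ha1 : 1 ≤ α := by linarith
    have hαβ' : α - 1 = β := by linarith
    -- a.e. nonneg
    have hae : ∀ᵐ x ∂μ, 0 ≤ x := by
      rw [ae_iff]
      convert hsupp using 2
      ext x; simp [Set.mem_Iio]
    -- lower bound for eqLaw S
    have hsf1 : SFinite (vLaw α) := by unfold vLaw; infer_instance
    have hsf2 : SFinite (powerBias β μ) := by unfold powerBias; infer_instance
    have hmul : Measurable fun q : ℝ × ℝ => q.1 * q.2 := measurable_fst.mul measurable_snd
    have key : ∫⁻ x in S, ENNReal.ofReal (β * t ^ α * (t⁻¹ - x⁻¹)) ∂μ ≤ eqLaw α β μ S := by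
      rw [eqLaw, Measure.map_apply hmul hS, Measure.prod_apply_symm (hmul hS)]
      calc ∫⁻ x in S, ENNReal.ofReal (β * t ^ α * (t⁻¹ - x⁻¹)) ∂μ
          = ∫⁻ x in S, ENNReal.ofReal (x ^ β / (α / β)) *
              ENNReal.ofReal (α * (t / x) ^ (α - 1) * (1 - t / x)) ∂μ := by
            apply setLIntegral_congr_fun hS
            intro x hx; beta_reduce
            have hxt : t < x := hx
            have hx0 : 0 < x := lt_trans ht0 hxt
            rw [← ENNReal.ofReal_mul (by positivity)]
            congr 1
            have hxβ : (0:ℝ) < x ^ β := Real.rpow_pos_of_pos hx0 β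
            have htβ : (0:ℝ) < t ^ β := Real.rpow_pos_of_pos ht0 β
            have h2 : (t / x) ^ (α - 1) = t ^ β / x ^ β := by
              rw [hαβ', Real.div_rpow ht0.le hx0.le]
            have h3 : t ^ α = t ^ β * t := by
              rw [show α = β + 1 by linarith, Real.rpow_add ht0, Real.rpow_one]
            rw [h2, h3]
            field_simp
        _ = ∫⁻ x in S, ENNReal.ofReal (x ^ β / ∫ y, y ^ β ∂μ) *
              ENNReal.ofReal (α * (t / x) ^ (α - 1) * (1 - t / x)) ∂μ := by rw [hmom]
        _ ≤ ∫⁻ x in S, ENNReal.ofReal (x ^ β / ∫ y, y ^ β ∂μ) *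
              vLaw α {u | t < u * x} ∂μ := by
            apply lintegral_mono_ae
            rw [ae_restrict_iff' hS]
            filter_upwards with x hx
            exact mul_le_mul_right (vLaw_section_ge α t x ha1 ht0 hx) _
        _ = ∫⁻ x in S, vLaw α {u | t < u * x} ∂(powerBias β μ) := by
            rw [powerBias, restrict_withDensity hS,
              lintegral_withDensity_eq_lintegral_mul _ ?_ ?_]
            · rfl
            · apply Measurable.ennreal_ofReal
              exact (measurable_id.pow_const β).div_const _
            · exact measurable_measure_prodMk_right (hmul hS)
        _ ≤ ∫⁻ x, vLaw α {u | t < u * x} ∂(powerBias β μ) :=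
            setLIntegral_le_lintegral _ _
        _ = ∫⁻ x, vLaw α ((fun u => (u, x)) ⁻¹' ((fun q : ℝ × ℝ => q.1 * q.2) ⁻¹' S))
              ∂(powerBias β μ) := rfl
    -- finiteness of eqLaw S
    have hpb : powerBias β μ Set.univ = ENNReal.ofReal 1 := by
      rw [powerBias, withDensity_apply _ MeasurableSet.univ, Measure.restrict_univ,
        ← ofReal_integral_eq_lintegral_ofReal (hint.div_const _)]
      · rw [integral_div, hmom, div_self (by positivity)]
      · filter_upwards [hae] with x hx
        exact div_nonneg (Real.rpow_nonneg hx β) (by rw [hmom]; positivity)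
    have hfin : eqLaw α β μ S ≠ ⊤ := by
      have h1 : eqLaw α β μ S ≤ vLaw α Set.univ * powerBias β μ Set.univ := by
        rw [eqLaw]
        refine le_trans (measure_mono (Set.subset_univ _)) ?_
        rw [Measure.map_apply hmul MeasurableSet.univ, Set.preimage_univ,
          ← Set.univ_prod_univ, Measure.prod_prod]
      refine ne_top_of_le_ne_top ?_ h1
      exact (ENNReal.mul_lt_top (lt_of_le_of_lt (vLaw_le α _ ha1) ENNReal.ofReal_lt_top)
        (hpb ▸ ENNReal.ofReal_lt_top)).ne
    -- combine
    have hle1 : (∫⁻ x in S, ENNReal.ofReal (β * t ^ α * (t⁻¹ - x⁻¹)) ∂μ).toReal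
        ≤ (μ S).toReal / p :=
      le_trans (ENNReal.toReal_mono hfin key) (hstar t)
    -- convert the lintegral to an integral
    have hmeas : AEStronglyMeasurable (fun x : ℝ => β * t ^ α * (t⁻¹ - x⁻¹)) (μ.restrict S) := by
      apply Measurable.aestronglyMeasurable
      exact (measurable_const.sub measurable_inv).const_mul _
    have hnn : 0 ≤ᵐ[μ.restrict S] fun x : ℝ => β * t ^ α * (t⁻¹ - x⁻¹) := by
      filter_upwards [ae_restrict_mem hS] with x hx
      have hxt : t < x := hx
      have hx0 : 0 < x := lt_trans ht0 hxt
      have : x⁻¹ ≤ t⁻¹ := by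
        apply inv_anti₀ ht0 hxt.le
      have h2 : (0:ℝ) < t ^ α := Real.rpow_pos_of_pos ht0 α
      simp only [Pi.zero_apply]
      have h4 : (0:ℝ) ≤ t⁻¹ - x⁻¹ := by linarith
      exact mul_nonneg (by positivity) h4
    have heq : ∫ x in S, β * t ^ α * (t⁻¹ - x⁻¹) ∂μ
        = (∫⁻ x in S, ENNReal.ofReal (β * t ^ α * (t⁻¹ - x⁻¹)) ∂μ).toReal :=
      integral_eq_lintegral_of_nonneg_ae hnn hmeas
    have hint2 : ∫ x in S, β * t ^ α * (t⁻¹ - x⁻¹) ∂μ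
        = β * t ^ α * ∫ x in S, (t⁻¹ - x⁻¹) ∂μ := integral_const_mul _ _
    have hneg : ∫ x in S, (x⁻¹ - t⁻¹) ∂μ = - ∫ x in S, (t⁻¹ - x⁻¹) ∂μ := by
      rw [← integral_neg]
      congr 1; ext x; ring
    have h2 : (0:ℝ) < t ^ α := Real.rpow_pos_of_pos ht0 α
    have hfinal : β * t ^ α * ∫ x in S, (t⁻¹ - x⁻¹) ∂μ ≤ (μ S).toReal / p := by
      rw [← hint2, heq]; exact hle1
    rw [hneg, neg_le_neg_iff]
    have h3 : ∫ x in S, (t⁻¹ - x⁻¹) ∂μ ≤ (μ S).toReal / p / (β * t ^ α) := by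
      rw [le_div_iff₀ (by positivity)]
      nlinarith [hfinal]
    calc ∫ x in S, (t⁻¹ - x⁻¹) ∂μ ≤ (μ S).toReal / p / (β * t ^ α) := h3
      _ = (μ S).toReal / (p * β * t ^ α) := by rw [div_div]; ring_nf
end

section
/- Let μ be a probability measure on [0,∞) and t > 0 with μ[t,∞) > 0. Then ∫_{[0,t)} 1/μ[x,∞) dμ(x) ≤ −log μ[t,∞). -/
open MeasureTheory
open scoped ENNReal

lemma surv_meas_lt_le (μ : Measure ℝ) [IsProbabilityMeasure μ] (hsupp : μ (Set.Iio 0) = 0)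
    (s : ℝ≥0∞) : μ {x | μ (Set.Ici x) < s} ≤ s := by
  rcases le_or_gt s 1 with hs | hs
  · set S := {x : ℝ | μ (Set.Ici x) < s} with hSdef
    have hup : ∀ ⦃x y : ℝ⦄, x ∈ S → x ≤ y → y ∈ S := fun x y hx hxy =>
      lt_of_le_of_lt (measure_mono (Set.Ici_subset_Ici.mpr hxy)) hx
    have hIci0 : μ (Set.Ici 0) = 1 := by
      rw [← Set.compl_Iio, measure_compl measurableSet_Iio (measure_ne_top μ _), hsupp,
        measure_univ, tsub_zero]
    rcases Set.eq_empty_or_nonempty S with hS | hS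
    · rw [hS]; simp
    · have hbdd : BddBelow S := by
        refine ⟨0, fun x hx => ?_⟩
        by_contra h
        push_neg at h
        have h1 : (1:ℝ≥0∞) ≤ μ (Set.Ici x) :=
          hIci0 ▸ measure_mono (Set.Ici_subset_Ici.mpr h.le)
        exact absurd (lt_of_le_of_lt h1 hx) (not_lt.mpr hs)
      set c := sInf S with hc
      by_cases hcS : c ∈ S
      · have hsub : S ⊆ Set.Ici c := fun x hx => csInf_le hbdd hx
        exact le_of_lt (lt_of_le_of_lt (measure_mono hsub) hcS)
      · have hsub : S ⊆ Set.Ioi c := fun x hx =>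
          lt_of_le_of_ne (csInf_le hbdd hx) (fun h => hcS (by rw [hc, h]; exact hx))
        have hmem : ∀ x, c < x → x ∈ S := by
          intro x hx
          obtain ⟨y, hyS, hyx⟩ := (csInf_lt_iff hbdd hS).mp hx
          exact hup hyS hyx.le
        have hIoi : Set.Ioi c = ⋃ n : ℕ, Set.Ici (c + ((n:ℝ)+1)⁻¹) := by
          ext x
          simp only [Set.mem_Ioi, Set.mem_iUnion, Set.mem_Ici]
          constructor
          · intro hx
            obtain ⟨n, hn⟩ := exists_nat_one_div_lt (sub_pos.mpr hx)
            rw [one_div] at hn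
            exact ⟨n, by linarith⟩
          · rintro ⟨n, hn⟩
            have h0 : (0:ℝ) < ((n:ℝ)+1)⁻¹ := by positivity
            linarith
        have hmono : Monotone fun n : ℕ => Set.Ici (c + ((n:ℝ)+1)⁻¹) := by
          intro n m hnm
          apply Set.Ici_subset_Ici.mpr
          have : ((m:ℝ)+1)⁻¹ ≤ ((n:ℝ)+1)⁻¹ := by
            apply inv_anti₀ (by positivity)
            exact_mod_cast by exact_mod_cast Nat.succ_le_succ hnm
          linarith
        calc μ S ≤ μ (Set.Ioi c) := measure_mono hsub
          _ = ⨆ n : ℕ, μ (Set.Ici (c + ((n:ℝ)+1)⁻¹)) := by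
              rw [hIoi]; exact hmono.directed_le.measure_iUnion
          _ ≤ s := iSup_le fun n => le_of_lt (hmem _ (lt_add_of_pos_right _ (by positivity)))
  · exact le_trans (measure_mono (Set.subset_univ _)) (by simp [hs.le])

/-- For a probability measure `μ` on `[0,∞)` and `t > 0` with `μ[t,∞) > 0`,
`∫_{[0,t)} 1/μ[x,∞) dμ(x) ≤ -log μ[t,∞)`. -/
theorem stmt7 (μ : Measure ℝ) [IsProbabilityMeasure μ] (hsupp : μ (Set.Iio 0) = 0)
    (t : ℝ) (ht : 0 < t) (hpos : 0 < μ (Set.Ici t)) :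
    ∫ x in Set.Ico 0 t, ((μ (Set.Ici x)).toReal)⁻¹ ∂μ
      ≤ - Real.log (μ (Set.Ici t)).toReal := by
  set a := μ (Set.Ici t) with hadef
  set ar := a.toReal with hardef
  have hane : a ≠ ⊤ := measure_ne_top μ _
  have har_pos : 0 < ar := ENNReal.toReal_pos hpos.ne' hane
  have ha1 : a ≤ 1 := prob_le_one
  have har1 : ar ≤ 1 := by
    have := ENNReal.toReal_mono (by simp) ha1
    simpa using this
  have haR : a = ENNReal.ofReal ar := (ENNReal.ofReal_toReal hane).symm
  have hanti : Antitone fun x : ℝ => μ (Set.Ici x) := fun x y hxy =>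
    measure_mono (Set.Ici_subset_Ici.mpr hxy)
  have hmeas : Measurable fun x : ℝ => μ (Set.Ici x) := hanti.measurable
  have hgmeas : Measurable fun x : ℝ => ((μ (Set.Ici x)).toReal)⁻¹ :=
    (ENNReal.measurable_toReal.comp hmeas).inv
  have hg0 : ∀ x : ℝ, 0 ≤ ((μ (Set.Ici x)).toReal)⁻¹ := fun x => by positivity
  have hlognn : 0 ≤ -Real.log ar := by
    have := Real.log_nonpos har_pos.le har1; linarith
  rw [MeasureTheory.integral_eq_lintegral_of_nonneg_ae
    (Filter.Eventually.of_forall hg0) hgmeas.aestronglyMeasurable]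
  refine ENNReal.toReal_le_of_le_ofReal hlognn ?_
  rw [lintegral_eq_lintegral_meas_lt (μ.restrict (Set.Ico 0 t))
    (Filter.Eventually.of_forall hg0) hgmeas.aemeasurable]
  -- pointwise bound on the tail measure
  have hbound : ∀ u ∈ Set.Ioi (0:ℝ),
      (μ.restrict (Set.Ico 0 t)) {x | u < ((μ (Set.Ici x)).toReal)⁻¹}
        ≤ ENNReal.ofReal (min (1 - ar) (u⁻¹ - ar)) := by
    intro u hu
    have hu0 : (0:ℝ) < u := hu
    rw [Measure.restrict_apply (show MeasurableSet {x | u < ((μ (Set.Ici x)).toReal)⁻¹}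
      from hgmeas measurableSet_Ioi)]
    rcases le_or_gt u⁻¹ ar with hcase | hcase
    · have hempty : {x | u < ((μ (Set.Ici x)).toReal)⁻¹} ∩ Set.Ico 0 t = ∅ := by
        ext x
        simp only [Set.mem_inter_iff, Set.mem_setOf_eq, Set.mem_Ico,
          Set.mem_empty_iff_false, iff_false, not_and]
        intro hx1 hx2 hx3
        have hax : a ≤ μ (Set.Ici x) := measure_mono (Set.Ici_subset_Ici.mpr hx3.le)
        have htr : ar ≤ (μ (Set.Ici x)).toReal := ENNReal.toReal_mono (measure_ne_top μ _) hax
        have hgx : ((μ (Set.Ici x)).toReal)⁻¹ ≤ ar⁻¹ := inv_anti₀ har_pos htr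
        have hau : ar⁻¹ ≤ u := by
          rw [← inv_inv u]; exact inv_anti₀ (by positivity) hcase
        linarith
      rw [hempty]; simp
    · set s : ℝ≥0∞ := ENNReal.ofReal u⁻¹ with hsdef
      have hsa : a < s := by
        rw [hsdef, haR]
        exact (ENNReal.ofReal_lt_ofReal_iff (by positivity)).mpr hcase
      have hsubS : {x | u < ((μ (Set.Ici x)).toReal)⁻¹} ⊆ {x | μ (Set.Ici x) < s} := by
        intro x hx
        simp only [Set.mem_setOf_eq] at hx ⊢
        have hy0 : (0:ℝ) ≤ (μ (Set.Ici x)).toReal := ENNReal.toReal_nonneg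
        have htr : (μ (Set.Ici x)).toReal < u⁻¹ := by
          rcases eq_or_lt_of_le hy0 with h0 | h0
          · rw [← h0]; positivity
          · have h1 : u * (μ (Set.Ici x)).toReal < 1 := by
              have := mul_lt_mul_of_pos_right hx h0
              rwa [inv_mul_cancel₀ h0.ne'] at this
            have h2 : u * u⁻¹ = 1 := mul_inv_cancel₀ hu0.ne'
            nlinarith
        exact (ENNReal.lt_ofReal_iff_toReal_lt (measure_ne_top μ _)).mpr htr
      have hST := surv_meas_lt_le μ hsupp s
      have hIciS : Set.Ici t ⊆ {x | μ (Set.Ici x) < s} := fun x hx =>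
        lt_of_le_of_lt (measure_mono (Set.Ici_subset_Ici.mpr hx)) hsa
      have hdisj : Disjoint ({x | u < ((μ (Set.Ici x)).toReal)⁻¹} ∩ Set.Ico 0 t)
          (Set.Ici t) := by
        refine Set.disjoint_left.mpr ?_
        rintro x ⟨-, -, hx2⟩ hx3
        exact absurd hx3 (not_le.mpr hx2)
      have hadd : μ ({x | u < ((μ (Set.Ici x)).toReal)⁻¹} ∩ Set.Ico 0 t) + a ≤ s := by
        rw [hadef, ← measure_union hdisj measurableSet_Ici]
        refine le_trans (measure_mono ?_) hST
        exact Set.union_subset ((Set.inter_subset_left).trans hsubS) hIciS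
      have h2 : μ ({x | u < ((μ (Set.Ici x)).toReal)⁻¹} ∩ Set.Ico 0 t)
          ≤ ENNReal.ofReal (u⁻¹ - ar) :=
        calc μ _ ≤ s - a := ENNReal.le_sub_of_add_le_right hane hadd
          _ = ENNReal.ofReal (u⁻¹ - ar) := by
            rw [hsdef, haR, ← ENNReal.ofReal_sub _ har_pos.le]
      have h1 : μ ({x | u < ((μ (Set.Ici x)).toReal)⁻¹} ∩ Set.Ico 0 t)
          ≤ ENNReal.ofReal (1 - ar) := by
        refine le_trans (measure_mono Set.inter_subset_right) ?_
        have hunion : μ (Set.Ico 0 t) + a ≤ 1 := by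
          rw [hadef, ← measure_union (by
            refine Set.disjoint_left.mpr ?_
            rintro x ⟨-, hx2⟩ hx3
            exact absurd hx3 (not_le.mpr hx2)) measurableSet_Ici]
          exact prob_le_one
        calc μ (Set.Ico 0 t) ≤ 1 - a := ENNReal.le_sub_of_add_le_right hane hunion
          _ = ENNReal.ofReal (1 - ar) := by
            rw [haR, ← ENNReal.ofReal_one, ← ENNReal.ofReal_sub _ har_pos.le]
      rcases le_total (1 - ar) (u⁻¹ - ar) with hmin | hmin
      · rw [min_eq_left hmin]; exact h1
      · rw [min_eq_right hmin]; exact h2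
  have hbmeas : Measurable fun u : ℝ => ENNReal.ofReal (min (1 - ar) (u⁻¹ - ar)) :=
    ENNReal.measurable_ofReal.comp (measurable_const.min (measurable_inv.sub measurable_const))
  have h1ar : (1:ℝ) ≤ ar⁻¹ := (one_le_inv₀ har_pos).mpr har1
  have hinvI : IntervalIntegrable (fun u : ℝ => u⁻¹) volume 1 ar⁻¹ := by
    apply intervalIntegral.intervalIntegrable_inv (f := fun x : ℝ => x)
    · intro x hx
      rw [Set.uIcc_of_le h1ar] at hx
      exact ne_of_gt (by linarith [hx.1])
    · exact continuousOn_id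
  calc ∫⁻ u in Set.Ioi 0, (μ.restrict (Set.Ico 0 t)) {x | u < ((μ (Set.Ici x)).toReal)⁻¹}
      ≤ ∫⁻ u in Set.Ioi 0, ENNReal.ofReal (min (1 - ar) (u⁻¹ - ar)) :=
        setLIntegral_mono hbmeas hbound
    _ = (∫⁻ u in Set.Ioc (0:ℝ) 1, ENNReal.ofReal (min (1 - ar) (u⁻¹ - ar))) +
        ∫⁻ u in Set.Ioi (1:ℝ), ENNReal.ofReal (min (1 - ar) (u⁻¹ - ar)) := by
        rw [← lintegral_union measurableSet_Ioi (Set.Ioc_disjoint_Ioi le_rfl),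
          Set.Ioc_union_Ioi_eq_Ioi zero_le_one]
    _ ≤ ENNReal.ofReal (1 - ar) + ENNReal.ofReal (-Real.log ar - (1 - ar)) := by
        gcongr
        · -- first piece
          have hcongr : ∀ u ∈ Set.Ioc (0:ℝ) 1,
              ENNReal.ofReal (min (1 - ar) (u⁻¹ - ar)) = ENNReal.ofReal (1 - ar) := by
            intro u hu
            have h1u : (1:ℝ) ≤ u⁻¹ := (one_le_inv₀ hu.1).mpr hu.2
            rw [min_eq_left (by linarith)]
          rw [setLIntegral_congr_fun measurableSet_Ioc hcongr,
            setLIntegral_const, Real.volume_Ioc]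
          simp
        · -- second piece
          have hcongr : ∀ u ∈ Set.Ioi (1:ℝ),
              ENNReal.ofReal (min (1 - ar) (u⁻¹ - ar))
                = Set.indicator (Set.Ioc 1 ar⁻¹) (fun u => ENNReal.ofReal (u⁻¹ - ar)) u := by
            intro u hu
            have hu1 : (1:ℝ) < u := hu
            have hui : u⁻¹ < 1 := inv_lt_one_of_one_lt₀ hu1
            rw [min_eq_right (by linarith)]
            rcases le_or_gt u ar⁻¹ with h | h
            · rw [Set.indicator_of_mem (Set.mem_Ioc.mpr ⟨hu1, h⟩)]
            · rw [Set.indicator_of_notMem (fun hmem => absurd hmem.2 (not_le.mpr h))]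
              have : u⁻¹ < ar := by
                rw [← inv_inv ar]; exact inv_strictAnti₀ (by positivity) h
              rw [ENNReal.ofReal_eq_zero.mpr (by linarith)]
          rw [setLIntegral_congr_fun measurableSet_Ioi hcongr,
            lintegral_indicator measurableSet_Ioc, Measure.restrict_restrict measurableSet_Ioc,
            Set.inter_eq_left.mpr (Set.Ioc_subset_Ioi_self)]
          have hInt : IntegrableOn (fun u : ℝ => u⁻¹ - ar) (Set.Ioc 1 ar⁻¹) volume := by
            have hii : IntervalIntegrable (fun u : ℝ => u⁻¹ - ar) volume 1 ar⁻¹ :=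
              IntervalIntegrable.sub hinvI intervalIntegrable_const
            exact (intervalIntegrable_iff_integrableOn_Ioc_of_le h1ar).mp hii
          have hnn : 0 ≤ᵐ[volume.restrict (Set.Ioc 1 ar⁻¹)] fun u : ℝ => u⁻¹ - ar := by
            filter_upwards [ae_restrict_mem measurableSet_Ioc] with u hu
            have : ar ≤ u⁻¹ := by
              rw [← inv_inv ar]; exact inv_anti₀ (by linarith [hu.1]) hu.2
            simp only [Pi.zero_apply]
            linarith
          rw [← ofReal_integral_eq_lintegral_ofReal hInt hnn]
          apply ENNReal.ofReal_le_ofReal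
          rw [← intervalIntegral.integral_of_le h1ar,
            intervalIntegral.integral_sub hinvI intervalIntegrable_const,
            integral_inv (by
              rw [Set.uIcc_of_le h1ar]
              rintro ⟨h0, -⟩
              linarith), intervalIntegral.integral_const]
          have har_ne : ar ≠ 0 := har_pos.ne'
          rw [div_one, Real.log_inv]
          have : (ar⁻¹ - 1) * ar = 1 - ar := by
            field_simp
          simp only [smul_eq_mul]
          linarith [this]
    _ = ENNReal.ofReal (-Real.log ar) := by
        rw [← ENNReal.ofReal_add (by linarith) (by
          have := Real.log_le_sub_one_of_pos har_pos; linarith)]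
        ring_nf
end

section
/- Let X be a random variable with 0 < E[X^β] < ∞, and for u ≥ 0 let Z(u) be distributed as [X | X ≥ u] (the case α = β of the record transform). For an independent copy X of X, Z(X) denotes the mixture ∫ P[X ∈ · | X ≥ u] dπ(u) where π is the law of X. Then for all t: P[Z(X) ≥ t] ≤ P[X ≥ t]·(1 − log P[X ≥ t]). -/
open MeasureTheory Set

/-- Sub-uniformity: the measure of the upper set where the tail is `< c` is `≤ c`. -/
lemma subunif (μ : Measure ℝ) (c : ENNReal) : μ {u : ℝ | μ (Set.Ici u) < c} ≤ c := by
  set A := {u : ℝ | μ (Set.Ici u) < c} with hA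
  rcases Set.eq_empty_or_nonempty A with h | ⟨a0, ha0⟩
  · simp [h]
  suffices h : ∃ v : ℕ → ℝ, (∀ n, v n ∈ A) ∧ ∀ a ∈ A, ∃ n, v n ≤ a by
    obtain ⟨v, hvA, hvle⟩ := h
    have hsub : A ⊆ ⋃ n, Set.Ici (v n) := fun a ha => by
      obtain ⟨n, hn⟩ := hvle a ha
      exact Set.mem_iUnion.mpr ⟨n, hn⟩
    have hdir : Directed (· ⊆ ·) fun n => Set.Ici (v n) := fun m n => by
      rcases le_total (v m) (v n) with h' | h'
      · exact ⟨m, subset_rfl, Set.Ici_subset_Ici.mpr h'⟩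
      · exact ⟨n, Set.Ici_subset_Ici.mpr h', subset_rfl⟩
    calc μ A ≤ μ (⋃ n, Set.Ici (v n)) := measure_mono hsub
      _ = ⨆ n, μ (Set.Ici (v n)) := hdir.measure_iUnion
      _ ≤ c := iSup_le fun n => (hvA n).le
  by_cases hb : BddBelow A
  · by_cases hbA : sInf A ∈ A
    · exact ⟨fun _ => sInf A, fun _ => hbA, fun a ha => ⟨0, csInf_le hb ha⟩⟩
    · have hex : ∀ n : ℕ, ∃ a ∈ A, a < sInf A + 1 / (n + 1) := by
        intro n
        apply exists_lt_of_csInf_lt ⟨a0, ha0⟩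
        have : (0:ℝ) < 1 / (n + 1) := by positivity
        linarith
      choose v hvA hvlt using hex
      refine ⟨v, hvA, fun a ha => ?_⟩
      have hba : sInf A < a := lt_of_le_of_ne (csInf_le hb ha) (by rintro rfl; exact hbA ha)
      obtain ⟨n, hn⟩ := exists_nat_one_div_lt (sub_pos.mpr hba)
      exact ⟨n, by have := hvlt n; linarith⟩
  · have hex : ∀ n : ℕ, ∃ a ∈ A, a < -n := by
      intro n
      obtain ⟨a, ha, hlt⟩ := not_bddBelow_iff.mp hb (-n)
      exact ⟨a, ha, hlt⟩
    choose v hvA hvlt using hex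
    refine ⟨v, hvA, fun a ha => ?_⟩
    obtain ⟨n, hn⟩ := exists_nat_ge (-a)
    exact ⟨n, by have := hvlt n; linarith⟩

lemma keybound (μ : Measure ℝ) [IsProbabilityMeasure μ] (t : ℝ) (c : ENNReal) :
    μ (Set.Iio t ∩ {u : ℝ | μ (Set.Ici u) < c}) ≤ c - μ (Set.Ici t) := by
  by_cases hc : μ (Set.Ici t) < c
  · have hsub : Set.Ici t ⊆ {u : ℝ | μ (Set.Ici u) < c} := fun u hu =>
      lt_of_le_of_lt (measure_mono (Set.Ici_subset_Ici.mpr hu)) hc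
    have hdisj : Disjoint (Set.Iio t ∩ {u : ℝ | μ (Set.Ici u) < c}) (Set.Ici t) :=
      (Set.Iio_disjoint_Ici le_rfl).mono_left Set.inter_subset_left
    have hunion : μ (Set.Iio t ∩ {u : ℝ | μ (Set.Ici u) < c}) + μ (Set.Ici t) ≤ c := by
      rw [← measure_union hdisj measurableSet_Ici]
      refine le_trans (measure_mono ?_) (subunif μ c)
      exact Set.union_subset Set.inter_subset_right hsub
    exact ENNReal.le_sub_of_add_le_right (measure_ne_top μ _) hunion
  · have : Set.Iio t ∩ {u : ℝ | μ (Set.Ici u) < c} = ∅ := by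
      ext u
      simp only [Set.mem_inter_iff, Set.mem_setOf_eq, Set.mem_Iio, Set.mem_empty_iff_false,
        iff_false, not_and]
      intro hu hlt
      exact absurd (lt_of_le_of_lt (measure_mono (Set.Ici_subset_Ici.mpr hu.le)) hlt) hc
    simp [this]

lemma tailint (μ : Measure ℝ) [IsProbabilityMeasure μ] (t : ℝ) (hpos : 0 < μ (Set.Ici t)) :
    ∫ u in Set.Iio t, ((μ (Set.Ici u)).toReal)⁻¹ ∂μ
      ≤ -Real.log (μ (Set.Ici t)).toReal := by
  set p := μ (Set.Ici t) with hp
  set pR := p.toReal with hpR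
  have hpt : p ≠ ⊤ := measure_ne_top μ _
  have hpR0 : 0 < pR := ENNReal.toReal_pos hpos.ne' hpt
  have hp1 : p ≤ 1 := prob_le_one
  have hpR1 : pR ≤ 1 := by
    rw [hpR]
    calc p.toReal ≤ (1 : ENNReal).toReal := ENNReal.toReal_mono ENNReal.one_ne_top hp1
      _ = 1 := by simp
  set Y : ℝ → ℝ := fun u => (μ (Set.Ici u)).toReal with hY
  have hYm : Measurable Y := by
    apply Measurable.ennreal_toReal
    exact Antitone.measurable fun u v huv =>
      measure_mono (Set.Ici_subset_Ici.mpr huv)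
  set R := pR⁻¹ with hR
  have hR1 : 1 ≤ R := (one_le_inv₀ hpR0).mpr hpR1
  have hpRR : pR * R = 1 := by rw [hR]; exact mul_inv_cancel₀ hpR0.ne'
  -- rewrite as lintegral
  have h1 : ∫ u in Set.Iio t, (Y u)⁻¹ ∂μ
      = (∫⁻ u in Set.Iio t, ENNReal.ofReal ((Y u)⁻¹) ∂μ).toReal := by
    apply integral_eq_lintegral_of_nonneg_ae
    · filter_upwards with u using inv_nonneg.mpr ENNReal.toReal_nonneg
    · exact hYm.inv.aestronglyMeasurable.restrict
  have h2 : ∫⁻ u in Set.Iio t, ENNReal.ofReal ((Y u)⁻¹) ∂μ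
      = ∫⁻ r in Set.Ioi (0:ℝ), (μ.restrict (Set.Iio t)) {u | r < (Y u)⁻¹} := by
    apply lintegral_eq_lintegral_meas_lt
    · filter_upwards with u using inv_nonneg.mpr ENNReal.toReal_nonneg
    · exact hYm.inv.aemeasurable.restrict
  set g : ℝ → ENNReal := fun r =>
    if r ≤ 1 then μ (Set.Iio t) else ENNReal.ofReal (1/r - pR) with hg
  have h3 : ∀ r ∈ Set.Ioi (0:ℝ), (μ.restrict (Set.Iio t)) {u | r < (Y u)⁻¹} ≤ g r := by
    intro r hr
    have hr0 : 0 < r := hr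
    have hSm : MeasurableSet {u : ℝ | r < (Y u)⁻¹} :=
      measurableSet_lt measurable_const hYm.inv
    rw [Measure.restrict_apply hSm]
    by_cases hr1 : r ≤ 1
    · rw [hg]
      simp only [if_pos hr1]
      exact measure_mono Set.inter_subset_right
    · rw [hg]
      simp only [if_neg hr1]
      have hsub : {u : ℝ | r < (Y u)⁻¹} ∩ Set.Iio t
          ⊆ Set.Iio t ∩ {u : ℝ | μ (Set.Ici u) < ENNReal.ofReal (1/r)} := by
        rintro u ⟨hu, hut⟩
        have hu' : r < (Y u)⁻¹ := hu
        refine ⟨hut, ?_⟩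
        have hYnn : 0 ≤ Y u := ENNReal.toReal_nonneg
        have hY0 : 0 < Y u := by
          rcases hYnn.lt_or_eq with h | h
          · exact h
          · exfalso; rw [← h] at hu'; simp at hu'; linarith
        have hYlt : Y u < 1 / r := by
          have hinv : Y u * (Y u)⁻¹ = 1 := mul_inv_cancel₀ hY0.ne'
          rw [lt_div_iff₀ hr0]
          nlinarith
        show μ (Set.Ici u) < ENNReal.ofReal (1/r)
        rw [ENNReal.lt_ofReal_iff_toReal_lt (measure_ne_top μ _)]
        exact hYlt
      calc μ ({u : ℝ | r < (Y u)⁻¹} ∩ Set.Iio t)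
          ≤ μ (Set.Iio t ∩ {u : ℝ | μ (Set.Ici u) < ENNReal.ofReal (1/r)}) :=
            measure_mono hsub
        _ ≤ ENNReal.ofReal (1/r) - p := keybound μ t _
        _ = ENNReal.ofReal (1/r) - ENNReal.ofReal pR := by rw [hpR, ENNReal.ofReal_toReal hpt]
        _ = ENNReal.ofReal (1/r - pR) := (ENNReal.ofReal_sub _ hpR0.le).symm
  have h4 : ∫⁻ r in Set.Ioi (0:ℝ), g r ≤ ENNReal.ofReal (-Real.log pR) := by
    have hsplit : Set.Ioi (0:ℝ) = Set.Ioc 0 1 ∪ Set.Ioi 1 :=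
      (Set.Ioc_union_Ioi_eq_Ioi (by norm_num)).symm
    rw [hsplit, lintegral_union measurableSet_Ioi (Set.Ioc_disjoint_Ioi le_rfl)]
    have hA : ∫⁻ r in Set.Ioc (0:ℝ) 1, g r = μ (Set.Iio t) := by
      rw [setLIntegral_congr_fun measurableSet_Ioc
        (fun r hr => if_pos hr.2),
        setLIntegral_const]
      simp [Real.volume_Ioc]
    have hB : ∫⁻ r in Set.Ioi (1:ℝ), g r
        ≤ ENNReal.ofReal (-Real.log pR - (1 - pR)) := by
      have hcong : ∫⁻ r in Set.Ioi (1:ℝ), g r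
          = ∫⁻ r in Set.Ioi (1:ℝ), ENNReal.ofReal (1/r - pR) := by
        apply setLIntegral_congr_fun measurableSet_Ioi
        intro r (hr : 1 < r)
        rw [hg]; simp only [if_neg (not_le.mpr hr)]
      rw [hcong]
      have hsplit2 : Set.Ioi (1:ℝ) = Set.Ioc 1 R ∪ Set.Ioi R :=
        (Set.Ioc_union_Ioi_eq_Ioi hR1).symm
      rw [hsplit2, lintegral_union measurableSet_Ioi (Set.Ioc_disjoint_Ioi le_rfl)]
      have hC : ∫⁻ r in Set.Ioi R, ENNReal.ofReal (1/r - pR) = 0 := by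
        have hzero : ∀ r ∈ Set.Ioi R, ENNReal.ofReal (1/r - pR) = (0:ENNReal) := by
          intro r hr
          have hRr : R < r := hr
          have hr0 : 0 < r := lt_of_lt_of_le one_pos (hR1.trans hRr.le)
          have hle : 1 / r ≤ pR := by
            rw [div_le_iff₀ hr0]
            nlinarith
          exact ENNReal.ofReal_eq_zero.mpr (by linarith)
        rw [setLIntegral_congr_fun measurableSet_Ioi
          hzero, lintegral_zero]
      have hD : ∫⁻ r in Set.Ioc (1:ℝ) R, ENNReal.ofReal (1/r - pR)
          = ENNReal.ofReal (-Real.log pR - (1 - pR)) := by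
        have hint : IntegrableOn (fun r => 1/r - pR) (Set.Ioc 1 R) := by
          apply IntegrableOn.mono_set ?_ Set.Ioc_subset_Icc_self
          apply ContinuousOn.integrableOn_compact isCompact_Icc
          apply ContinuousOn.sub ?_ continuousOn_const
          apply ContinuousOn.div continuousOn_const continuousOn_id
          intro x hx
          exact ne_of_gt (lt_of_lt_of_le one_pos hx.1)
        have hnn : 0 ≤ᵐ[volume.restrict (Set.Ioc (1:ℝ) R)] fun r => 1/r - pR := by
          filter_upwards [ae_restrict_mem measurableSet_Ioc] with r hr
          have hr0 : 0 < r := lt_trans one_pos hr.1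
          have : pR ≤ 1 / r := by
            rw [le_div_iff₀ hr0]
            nlinarith [hr.2, hpR0]
          simp only [Pi.zero_apply]
          linarith
        rw [← ofReal_integral_eq_lintegral_ofReal hint hnn]
        congr 1
        rw [← intervalIntegral.integral_of_le hR1]
        have hi1 : IntervalIntegrable (fun r : ℝ => 1/r) volume 1 R := by
          apply ContinuousOn.intervalIntegrable
          apply ContinuousOn.div continuousOn_const continuousOn_id
          intro x hx
          rw [Set.uIcc_of_le hR1] at hx
          exact ne_of_gt (lt_of_lt_of_le one_pos hx.1)
        rw [intervalIntegral.integral_sub hi1 intervalIntegrable_const]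
        rw [integral_one_div (by
          rw [Set.uIcc_of_le hR1]
          intro h
          exact absurd h.1 (by norm_num)), intervalIntegral.integral_const]
        rw [div_one, hR, Real.log_inv, smul_eq_mul]
        have h1 : pR⁻¹ * pR = 1 := inv_mul_cancel₀ hpR0.ne'
        linear_combination -h1
      rw [hC, hD, add_zero]
    calc (∫⁻ r in Set.Ioc (0:ℝ) 1, g r) + ∫⁻ r in Set.Ioi (1:ℝ), g r
        ≤ μ (Set.Iio t) + ENNReal.ofReal (-Real.log pR - (1 - pR)) := add_le_add hA.le hB
      _ = ENNReal.ofReal (1 - pR) + ENNReal.ofReal (-Real.log pR - (1 - pR)) := by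
          congr 1
          rw [← Set.compl_Ici, measure_compl measurableSet_Ici hpt, measure_univ, ← hp]
          rw [ENNReal.ofReal_sub _ hpR0.le, ENNReal.ofReal_one, hpR,
            ENNReal.ofReal_toReal hpt]
      _ = ENNReal.ofReal (-Real.log pR) := by
          rw [← ENNReal.ofReal_add (by linarith)
            (by nlinarith [Real.log_le_sub_one_of_pos hpR0])]
          congr 1
          ring
  have hlog : 0 ≤ -Real.log pR := by
    have := Real.log_nonpos hpR0.le hpR1
    linarith
  calc ∫ u in Set.Iio t, (Y u)⁻¹ ∂μ
      = (∫⁻ u in Set.Iio t, ENNReal.ofReal ((Y u)⁻¹) ∂μ).toReal := h1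
    _ ≤ (ENNReal.ofReal (-Real.log pR)).toReal := by
        apply ENNReal.toReal_mono ENNReal.ofReal_ne_top
        rw [h2]
        exact le_trans (setLIntegral_mono' measurableSet_Ioi h3) h4
    _ = -Real.log pR := ENNReal.toReal_ofReal hlog

/-- Record-transform bound: with `Z(u) ~ [X | X ≥ u]` and `Z(X)` the mixture over an
independent copy of `X`, `P[Z(X) ≥ t] ≤ P[X ≥ t]·(1 - log P[X ≥ t])`.
Here `P[Z(X) ≥ t] = ∫ (1{u ≥ t} + 1{u < t}·P[X ≥ t]/P[X ≥ u]) dμ(u)`. -/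
theorem stmt8 (μ : Measure ℝ) [IsProbabilityMeasure μ] (hsupp : μ (Set.Iio 0) = 0)
    (t : ℝ) (hpos : 0 < μ (Set.Ici t)) :
    ∫ u, (if t ≤ u then (1 : ℝ) else (μ (Set.Ici t)).toReal / (μ (Set.Ici u)).toReal) ∂μ
      ≤ (μ (Set.Ici t)).toReal * (1 - Real.log (μ (Set.Ici t)).toReal) := by
  set pR := (μ (Set.Ici t)).toReal with hpR
  have hpt : μ (Set.Ici t) ≠ ⊤ := measure_ne_top μ _
  have hpR0 : 0 < pR := ENNReal.toReal_pos hpos.ne' hpt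
  set Y : ℝ → ℝ := fun u => (μ (Set.Ici u)).toReal with hY
  have hYm : Measurable Y := by
    apply Measurable.ennreal_toReal
    exact Antitone.measurable fun u v huv =>
      measure_mono (Set.Ici_subset_Ici.mpr huv)
  set f : ℝ → ℝ := fun u => if t ≤ u then (1 : ℝ) else pR / Y u with hf
  have hYlb : ∀ u, u < t → pR ≤ Y u := fun u hu =>
    ENNReal.toReal_mono (measure_ne_top μ _)
      (measure_mono (Set.Ici_subset_Ici.mpr hu.le))
  have hfm : Measurable f := by
    apply Measurable.ite measurableSet_Ici measurable_const
    exact measurable_const.div hYm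
  have hfb : ∀ u, 0 ≤ f u ∧ f u ≤ 1 := by
    intro u
    rw [hf]
    by_cases hu : t ≤ u
    · simp [hu]
    · simp only [if_neg hu]
      have h1 : pR ≤ Y u := hYlb u (not_le.mp hu)
      have h2 : 0 < Y u := lt_of_lt_of_le hpR0 h1
      exact ⟨div_nonneg hpR0.le h2.le, (div_le_one h2).mpr h1⟩
  have hfint : Integrable f μ := by
    apply Integrable.mono' (integrable_const (1:ℝ)) hfm.aestronglyMeasurable
    filter_upwards with u
    rw [Real.norm_eq_abs, abs_le]
    exact ⟨by linarith [(hfb u).1], (hfb u).2⟩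
  have hsplitI : (∫ u in Set.Ici t, f u ∂μ) + ∫ u in Set.Iio t, f u ∂μ = ∫ u, f u ∂μ := by
    rw [← Set.compl_Ici]
    exact integral_add_compl measurableSet_Ici hfint
  have hIci : ∫ u in Set.Ici t, f u ∂μ = pR := by
    have heq : ∀ u ∈ Set.Ici t, f u = 1 := fun u hu => if_pos hu
    rw [setIntegral_congr_fun measurableSet_Ici heq]
    simp [hpR, measureReal_def]
  have hIio : ∫ u in Set.Iio t, f u ∂μ = pR * ∫ u in Set.Iio t, (Y u)⁻¹ ∂μ := by
    have heq : ∀ u ∈ Set.Iio t, f u = pR * (Y u)⁻¹ := fun u hu => by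
      rw [hf]; simp only [if_neg (not_le.mpr (Set.mem_Iio.mp hu)), div_eq_mul_inv]
    rw [setIntegral_congr_fun measurableSet_Iio heq]
    exact integral_const_mul pR _
  have hkey : ∫ u in Set.Iio t, (Y u)⁻¹ ∂μ ≤ -Real.log pR := tailint μ t hpos
  have hInn : 0 ≤ ∫ u in Set.Iio t, (Y u)⁻¹ ∂μ := by
    apply integral_nonneg
    intro u
    exact inv_nonneg.mpr ENNReal.toReal_nonneg
  calc ∫ u, f u ∂μ = pR + pR * ∫ u in Set.Iio t, (Y u)⁻¹ ∂μ := by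
        rw [← hsplitI, hIci, hIio]
    _ ≤ pR + pR * (-Real.log pR) :=
        add_le_add_right (mul_le_mul_of_nonneg_left hkey hpR0.le) pR
    _ = pR * (1 - Real.log pR) := by ring
end

section
/- Suppose X is a nonnegative random variable with E[X^β] = 1 (taking α = β), and its (β,β)-generalized equilibrium transform X* satisfies P[X* > t] ≤ P[X > t]/p for all t, where p ∈ (0,1]. Then for all t > 0: P[X ≥ t] ≤ e^{1 − p t^β}. -/
open MeasureTheory intervalIntegral

section Aux

instance inst_s9 (a : ℝ) : SFinite (vLaw a) := by unfold vLaw; infer_instance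

lemma measurable_rpow_c {β : ℝ} (hβ : 0 < β) : Measurable (fun x : ℝ => x ^ β) :=
  (Real.continuous_rpow_const hβ.le).measurable

lemma vLaw_Ioi {β : ℝ} (hβ : 0 < β) {c : ℝ} (hc : 0 < c) (hc1 : c < 1) :
    vLaw β (Set.Ioi c) = ENNReal.ofReal (1 - c ^ β) := by
  rw [vLaw, withDensity_apply _ measurableSet_Ioi,
    Measure.restrict_restrict measurableSet_Ioi]
  have hseteq : Set.Ioi c ∩ Set.Ioc 0 1 = Set.Ioc c 1 := by
    ext v; simp only [Set.mem_inter_iff, Set.mem_Ioi, Set.mem_Ioc]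
    constructor
    · rintro ⟨h1, _, h3⟩; exact ⟨h1, h3⟩
    · rintro ⟨h1, h2⟩; exact ⟨h1, hc.trans h1, h2⟩
  rw [hseteq]
  have hInt : IntegrableOn (fun v : ℝ => β * v ^ (β - 1)) (Set.Ioc c 1) volume := by
    have := (intervalIntegrable_rpow' (a := c) (b := 1) (r := β - 1) (by linarith)).const_mul β
    rw [intervalIntegrable_iff_integrableOn_Ioc_of_le hc1.le] at this
    exact this
  rw [← ofReal_integral_eq_lintegral_ofReal hInt]
  · congr 1
    rw [← intervalIntegral.integral_of_le hc1.le]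
    rw [intervalIntegral.integral_const_mul, integral_rpow (Or.inl (by linarith))]
    rw [sub_add_cancel, Real.one_rpow]
    field_simp
  · filter_upwards [self_mem_ae_restrict (measurableSet_Ioc : MeasurableSet (Set.Ioc c 1))] with v hv
    have : 0 < v := hc.trans hv.1
    positivity

lemma vLaw_null {β : ℝ} {S : Set ℝ} (hS : MeasurableSet S)
    (h : S ∩ Set.Ioc (0 : ℝ) 1 = ∅) : vLaw β S = 0 := by
  rw [vLaw, withDensity_apply _ hS, Measure.restrict_restrict hS, h]
  simp

/-- The key auxiliary function `h(u) = E[(X^β - u^β)⁺]`. -/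
noncomputable def hfun (β : ℝ) (μ : Measure ℝ) (u : ℝ) : ℝ :=
  ∫ x, max (x ^ β - u ^ β) 0 ∂μ

lemma hfun_integrable {β : ℝ} (hβ : 0 < β) {μ : Measure ℝ}
    (hint : Integrable (fun x => x ^ β) μ) {u : ℝ} (hu : 0 ≤ u) :
    Integrable (fun x => max (x ^ β - u ^ β) 0) μ := by
  refine hint.mono ?_ ?_
  · exact (((measurable_rpow_c hβ).sub measurable_const).max measurable_const).aestronglyMeasurable
  · refine Filter.Eventually.of_forall (fun x => ?_)
    have hub : 0 ≤ u ^ β := Real.rpow_nonneg hu β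
    rw [Real.norm_eq_abs, Real.norm_eq_abs, abs_of_nonneg (le_max_right _ _)]
    rcases le_or_gt (x ^ β - u ^ β) 0 with h | h
    · rw [max_eq_right h]; exact abs_nonneg _
    · rw [max_eq_left h.le]
      calc x ^ β - u ^ β ≤ x ^ β := by linarith
        _ ≤ |x ^ β| := le_abs_self _

lemma hfun_nonneg {β : ℝ} {μ : Measure ℝ} (u : ℝ) : 0 ≤ hfun β μ u :=
  integral_nonneg (fun _ => le_max_right _ _)

lemma ae_nonneg_of_supp {μ : Measure ℝ} (hsupp : μ (Set.Iio 0) = 0) :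
    ∀ᵐ x ∂μ, 0 ≤ x := by
  rw [ae_iff]
  convert hsupp using 2
  ext x; simp [not_le]

lemma hfun_zero {β : ℝ} (hβ : 0 < β) {μ : Measure ℝ}
    (hsupp : μ (Set.Iio 0) = 0) (hmom : ∫ x, x ^ β ∂μ = 1) :
    hfun β μ 0 = 1 := by
  rw [hfun, ← hmom]
  refine integral_congr_ae ?_
  filter_upwards [ae_nonneg_of_supp hsupp] with x hx
  rw [Real.zero_rpow hβ.ne', sub_zero, max_eq_left (Real.rpow_nonneg hx β)]

/-- Tail formula for the equilibrium transform. -/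
lemma eqLaw_tail {β : ℝ} (hβ : 0 < β) {μ : Measure ℝ} [IsProbabilityMeasure μ]
    (hsupp : μ (Set.Iio 0) = 0) (hint : Integrable (fun x => x ^ β) μ)
    (hmom : ∫ x, x ^ β ∂μ = 1) {u : ℝ} (hu : 0 < u) :
    eqLaw β β μ {x | u < x} = ENNReal.ofReal (hfun β μ u) := by
  have hmf : Measurable fun q : ℝ × ℝ => q.1 * q.2 := measurable_fst.mul measurable_snd
  have hset : MeasurableSet {x : ℝ | u < x} := measurableSet_Ioi
  have hpB : powerBias β μ = μ.withDensity (fun x => ENNReal.ofReal (x ^ β)) := by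
    rw [powerBias, hmom]; simp
  rw [eqLaw, Measure.map_apply hmf hset, hpB,
    Measure.prod_apply_symm (hmf hset),
    lintegral_withDensity_eq_lintegral_mul_non_measurable _
      ((measurable_rpow_c hβ).ennreal_ofReal)
      (Filter.Eventually.of_forall fun x => ENNReal.ofReal_lt_top)]
  rw [hfun, ofReal_integral_eq_lintegral_ofReal (hfun_integrable hβ hint hu.le)
      (Filter.Eventually.of_forall fun x => le_max_right _ _)]
  refine lintegral_congr_ae ?_
  filter_upwards [ae_nonneg_of_supp hsupp] with x hx
  simp only [Pi.mul_apply]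
  have hsetx : (fun v => (v, x)) ⁻¹' ((fun q : ℝ × ℝ => q.1 * q.2) ⁻¹' {x | u < x})
      = {v : ℝ | u < v * x} := rfl
  rw [hsetx]
  rcases eq_or_lt_of_le hx with hx0 | hx0
  · rw [← hx0, Real.zero_rpow hβ.ne']
    simp only [ENNReal.ofReal_zero, zero_mul]
    symm
    rw [ENNReal.ofReal_eq_zero]
    exact sup_le (by simp [Real.rpow_nonneg hu.le β]) le_rfl
  · have hIoi : {v : ℝ | u < v * x} = Set.Ioi (u / x) := by
      ext v; simp only [Set.mem_setOf_eq, Set.mem_Ioi]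
      rw [div_lt_iff₀ hx0]
    rw [hIoi]
    rcases lt_or_ge u x with hux | hux
    · have hdiv : 0 < u / x := div_pos hu hx0
      have hdlt : u / x < 1 := (div_lt_one hx0).2 hux
      rw [vLaw_Ioi hβ hdiv hdlt, ← ENNReal.ofReal_mul (Real.rpow_nonneg hx β)]
      congr 1
      have hdr : (u / x) ^ β = u ^ β / x ^ β := Real.div_rpow hu.le hx0.le β
      have hxb : (0:ℝ) < x ^ β := Real.rpow_pos_of_pos hx0 β
      have hub : u ^ β < x ^ β := Real.rpow_lt_rpow hu.le hux hβ
      rw [hdr, max_eq_left (by linarith)]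
      field_simp
    · have hnull : vLaw β (Set.Ioi (u / x)) = 0 := by
        refine vLaw_null measurableSet_Ioi ?_
        ext v
        simp only [Set.mem_inter_iff, Set.mem_Ioi, Set.mem_Ioc, Set.mem_empty_iff_false,
          iff_false, not_and]
        intro hv hv0 hv1
        have : (1:ℝ) ≤ u / x := (one_le_div hx0).2 hux
        linarith
      rw [hnull, mul_zero]
      have : x ^ β ≤ u ^ β := Real.rpow_le_rpow hx hux hβ.le
      rw [max_eq_right (by linarith)]
      simp

/-- Markov-type step inequality. -/
lemma step_ineq {β : ℝ} (hβ : 0 < β) {μ : Measure ℝ} [IsProbabilityMeasure μ]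
    (hint : Integrable (fun x => x ^ β) μ) {s t : ℝ} (hs : 0 ≤ s) (hst : s ≤ t) :
    (t ^ β - s ^ β) * (μ (Set.Ici t)).toReal + hfun β μ t ≤ hfun β μ s := by
  have ht : 0 ≤ t := hs.trans hst
  have hsb : s ^ β ≤ t ^ β := Real.rpow_le_rpow hs hst hβ.le
  have hInd : Integrable (fun x => Set.indicator (Set.Ici t) (fun _ => t ^ β - s ^ β) x) μ :=
    (integrable_const _).indicator measurableSet_Ici
  have hI1 := hfun_integrable hβ hint ht
  have hI2 := hfun_integrable hβ hint hs
  have hmono : ∀ x : ℝ, Set.indicator (Set.Ici t) (fun _ => t ^ β - s ^ β) x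
      + max (x ^ β - t ^ β) 0 ≤ max (x ^ β - s ^ β) 0 := by
    intro x
    by_cases hxt : t ≤ x
    · rw [Set.indicator_of_mem (Set.mem_Ici.mpr hxt)]
      have hxb : t ^ β ≤ x ^ β := Real.rpow_le_rpow ht hxt hβ.le
      rw [max_eq_left (by linarith), max_eq_left (by linarith)]
      ring_nf; exact le_rfl
    · rw [Set.indicator_of_notMem (by simpa using hxt), zero_add]
      exact max_le_max (by linarith) le_rfl
  have := integral_mono (hInd.add hI1) hI2 hmono
  simp only [Pi.add_apply] at this
  rw [integral_add hInd hI1, integral_indicator_const _ measurableSet_Ici] at this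
  simpa [hfun, smul_eq_mul, mul_comm, Measure.real] using this

/-- Recursion step combining the Markov inequality with the hypothesis `hstar`. -/
lemma rec_step {β p : ℝ} (hβ : 0 < β) (hp : 0 < p) {μ : Measure ℝ} [IsProbabilityMeasure μ]
    (hsupp : μ (Set.Iio 0) = 0) (hint : Integrable (fun x => x ^ β) μ)
    (hmom : ∫ x, x ^ β ∂μ = 1)
    (hstar : ∀ t : ℝ, (eqLaw β β μ {x | t < x}).toReal ≤ (μ {x | t < x}).toReal / p)
    {s t : ℝ} (hs : 0 ≤ s) (hst : s ≤ t) (ht : 0 < t) :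
    hfun β μ t * (1 + p * (t ^ β - s ^ β)) ≤ hfun β μ s := by
  have hsb : s ^ β ≤ t ^ β := Real.rpow_le_rpow hs hst hβ.le
  have hkey : p * hfun β μ t ≤ (μ (Set.Ici t)).toReal := by
    have h1 := hstar t
    rw [eqLaw_tail hβ hsupp hint hmom ht, ENNReal.toReal_ofReal (hfun_nonneg t)] at h1
    have h2 : (μ {x | t < x}).toReal ≤ (μ (Set.Ici t)).toReal := by
      refine ENNReal.toReal_mono (measure_ne_top μ _) ?_
      exact measure_mono (fun x (hx : t < x) => show t ≤ x from le_of_lt hx)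
    calc p * hfun β μ t ≤ p * ((μ {x | t < x}).toReal / p) :=
          mul_le_mul_of_nonneg_left h1 hp.le
      _ = (μ {x | t < x}).toReal := by field_simp
      _ ≤ (μ (Set.Ici t)).toReal := h2
  have hstep := step_ineq hβ hint hs hst
  nlinarith [hfun_nonneg (β := β) (μ := μ) t]

lemma iter_bound {β p : ℝ} (hβ : 0 < β) (hp : 0 < p) {μ : Measure ℝ} [IsProbabilityMeasure μ]
    (hsupp : μ (Set.Iio 0) = 0) (hint : Integrable (fun x => x ^ β) μ)
    (hmom : ∫ x, x ^ β ∂μ = 1)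
    (hstar : ∀ t : ℝ, (eqLaw β β μ {x | t < x}).toReal ≤ (μ {x | t < x}).toReal / p)
    {t : ℝ} (ht : 0 < t) (n : ℕ) (hn : 1 ≤ n) :
    hfun β μ t * (1 + p * t ^ β / n) ^ n ≤ 1 := by
  have htb : 0 < t ^ β := Real.rpow_pos_of_pos ht β
  have hn0 : (0:ℝ) < n := by exact_mod_cast hn
  set u : ℕ → ℝ := fun i => ((i : ℝ) * t ^ β / n) ^ (β⁻¹ : ℝ) with hu
  have hbase : ∀ i : ℕ, 0 ≤ (i : ℝ) * t ^ β / n := by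
    intro i; positivity
  have hupow : ∀ i : ℕ, (u i) ^ β = (i : ℝ) * t ^ β / n := by
    intro i; exact Real.rpow_inv_rpow (hbase i) hβ.ne'
  have hu0 : u 0 = 0 := by
    simp only [hu, Nat.cast_zero, zero_mul, zero_div]
    exact Real.zero_rpow (by simpa using hβ.ne')
  have hun : u n = t := by
    simp only [hu]
    rw [mul_div_cancel_left₀ _ (ne_of_gt hn0)]
    exact Real.rpow_rpow_inv ht.le hβ.ne'
  have hunn : ∀ i : ℕ, 0 ≤ u i := fun i => Real.rpow_nonneg (hbase i) _
  have hupos : ∀ i : ℕ, 1 ≤ i → 0 < u i := by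
    intro i hi
    refine Real.rpow_pos_of_pos ?_ _
    have : (1:ℝ) ≤ (i:ℝ) := by exact_mod_cast hi
    positivity
  have humono : ∀ i : ℕ, u i ≤ u (i + 1) := by
    intro i
    refine Real.rpow_le_rpow (hbase i) ?_ (by positivity)
    have : (i:ℝ) ≤ (i:ℝ) + 1 := by linarith
    push_cast
    gcongr
  have hdelta : ∀ i : ℕ, (u (i + 1)) ^ β - (u i) ^ β = t ^ β / n := by
    intro i
    rw [hupow, hupow]
    push_cast
    field_simp
    ring
  have hmain : ∀ j : ℕ, j ≤ n → hfun β μ t * (1 + p * t ^ β / n) ^ j ≤ hfun β μ (u (n - j)) := by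
    intro j
    induction j with
    | zero => intro _; simpa [hun] using le_rfl
    | succ j ih =>
      intro hjn
      have hjn' : j ≤ n := by omega
      have hind := ih hjn'
      have hnj : n - j = (n - (j + 1)) + 1 := by omega
      set i := n - (j + 1) with hi
      have hrec := rec_step hβ hp hsupp hint hmom hstar (hunn i) (humono i)
        (hupos (i + 1) (by omega))
      rw [hdelta i] at hrec
      have hq : (0:ℝ) ≤ 1 + p * t ^ β / n := by positivity
      calc hfun β μ t * (1 + p * t ^ β / n) ^ (j + 1)
          = (hfun β μ t * (1 + p * t ^ β / n) ^ j) * (1 + p * t ^ β / n) := by ring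
        _ ≤ hfun β μ (u (n - j)) * (1 + p * t ^ β / n) :=
            mul_le_mul_of_nonneg_right hind hq
        _ = hfun β μ (u (i + 1)) * (1 + p * (t ^ β / n)) := by
            rw [hnj]; ring_nf
        _ ≤ hfun β μ (u i) := hrec
  have := hmain n le_rfl
  rw [Nat.sub_self, hu0, hfun_zero hβ hsupp hmom] at this
  exact this

lemma hfun_le_exp {β p : ℝ} (hβ : 0 < β) (hp : 0 < p) {μ : Measure ℝ} [IsProbabilityMeasure μ]
    (hsupp : μ (Set.Iio 0) = 0) (hint : Integrable (fun x => x ^ β) μ)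
    (hmom : ∫ x, x ^ β ∂μ = 1)
    (hstar : ∀ t : ℝ, (eqLaw β β μ {x | t < x}).toReal ≤ (μ {x | t < x}).toReal / p)
    {t : ℝ} (ht : 0 < t) :
    hfun β μ t ≤ Real.exp (-(p * t ^ β)) := by
  set x := p * t ^ β with hx
  have hlim : Filter.Tendsto (fun n : ℕ => hfun β μ t * (1 + x / n) ^ n)
      Filter.atTop (nhds (hfun β μ t * Real.exp x)) :=
    (Real.tendsto_one_add_div_pow_exp x).const_mul _
  have hle : hfun β μ t * Real.exp x ≤ 1 := by
    refine le_of_tendsto hlim ?_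
    filter_upwards [Filter.eventually_ge_atTop 1] with n hn
    exact iter_bound hβ hp hsupp hint hmom hstar ht n hn
  have h2 : hfun β μ t ≤ 1 / Real.exp x := by
    rw [le_div_iff₀ (Real.exp_pos x)]; exact hle
  simpa [Real.exp_neg, one_div] using h2

end Aux

/-- Upper tail bound in the `α = β` case: if `E[X^β] = 1` and `X* ⪯_p X`,
then `P[X ≥ t] ≤ exp(1 - p t^β)` for all `t > 0`. -/
theorem stmt9 (μ : Measure ℝ) [IsProbabilityMeasure μ] (β p : ℝ)
    (hβ : 0 < β) (hp : 0 < p) (hp1 : p ≤ 1)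
    (hsupp : μ (Set.Iio 0) = 0)
    (hint : Integrable (fun x => x ^ β) μ)
    (hmom : ∫ x, x ^ β ∂μ = 1)
    (hstar : ∀ t : ℝ, (eqLaw β β μ {x | t < x}).toReal ≤ (μ {x | t < x}).toReal / p) :
    ∀ t : ℝ, 0 < t → (μ (Set.Ici t)).toReal ≤ Real.exp (1 - p * t ^ β) := by
  intro t ht
  have hprb : (μ (Set.Ici t)).toReal ≤ 1 := by
    have h1 : μ (Set.Ici t) ≤ 1 := prob_le_one
    calc (μ (Set.Ici t)).toReal ≤ (1 : ENNReal).toReal := ENNReal.toReal_mono (by simp) h1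
      _ = 1 := by simp
  by_cases hcase : p * t ^ β ≤ 1
  · calc (μ (Set.Ici t)).toReal ≤ 1 := hprb
      _ ≤ Real.exp (1 - p * t ^ β) := Real.one_le_exp (by linarith)
  · push_neg at hcase
    have htb : 0 < t ^ β := Real.rpow_pos_of_pos ht β
    have hsub : 0 < t ^ β - 1 / p := by
      rw [sub_pos, div_lt_iff₀ hp, mul_comm]; exact hcase
    set s := (t ^ β - 1 / p) ^ (β⁻¹ : ℝ) with hs
    have hs0 : 0 < s := Real.rpow_pos_of_pos hsub _
    have hsb : s ^ β = t ^ β - 1 / p := Real.rpow_inv_rpow hsub.le hβ.ne'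
    have hst : s ≤ t := by
      rw [hs]
      calc (t ^ β - 1 / p) ^ (β⁻¹ : ℝ) ≤ (t ^ β) ^ (β⁻¹ : ℝ) :=
            Real.rpow_le_rpow hsub.le (by linarith [one_div_pos.2 hp]) (by positivity)
        _ = t := Real.rpow_rpow_inv ht.le hβ.ne'
    have hstep := step_ineq hβ hint hs0.le hst
    rw [hsb] at hstep
    have hdd : t ^ β - (t ^ β - 1 / p) = 1 / p := by ring
    rw [hdd] at hstep
    have hhs := hfun_le_exp hβ hp hsupp hint hmom hstar hs0
    have hps : p * s ^ β = p * t ^ β - 1 := by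
      rw [hsb]; field_simp
    rw [hps] at hhs
    have hft : 0 ≤ hfun β μ t := hfun_nonneg t
    have hkey : (μ (Set.Ici t)).toReal ≤ p * hfun β μ s := by
      have h4 : (1 / p) * (μ (Set.Ici t)).toReal ≤ hfun β μ s := by linarith
      calc (μ (Set.Ici t)).toReal = p * ((1 / p) * (μ (Set.Ici t)).toReal) := by
            field_simp
        _ ≤ p * hfun β μ s := mul_le_mul_of_nonneg_left h4 hp.le
    calc (μ (Set.Ici t)).toReal ≤ p * hfun β μ s := hkey
      _ ≤ p * Real.exp (-(p * t ^ β - 1)) := mul_le_mul_of_nonneg_left hhs hp.le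
      _ ≤ 1 * Real.exp (-(p * t ^ β - 1)) :=
          mul_le_mul_of_nonneg_right hp1 (Real.exp_pos _).le
      _ = Real.exp (1 - p * t ^ β) := by rw [one_mul]; congr 1; ring
end

section
/- Let X₁,…,Xₙ be i.i.d. nonnegative random variables with finite positive mean, S = X₁+⋯+Xₙ, and let I be uniform on {1,…,n} independent of everything. Then the (1,1)-equilibrium transform S* of S has the same distribution as X₁+⋯+X_{I−1} + X_I*, where X_I* is an independent equilibrium-transformed copy. -/
open MeasureTheory

/-- Convolution of two laws on `ℝ` (law of the sum of independent variables). -/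
noncomputable def mconv (μ ν : Measure ℝ) : Measure ℝ :=
  (μ.prod ν).map (fun p => p.1 + p.2)

/-- Law of `X₁ + ⋯ + Xₙ` for i.i.d. variables with law `μ`. -/
noncomputable def sumLaw (μ : Measure ℝ) : ℕ → Measure ℝ
  | 0 => Measure.dirac 0
  | (n + 1) => mconv (sumLaw μ n) μ

section Aux

open Set ENNReal

lemma vLaw_one : vLaw 1 = volume.restrict (Set.Ioc (0 : ℝ) 1) := by
  unfold vLaw
  have h : (fun u : ℝ => ENNReal.ofReal (1 * u ^ ((1 : ℝ) - 1))) = fun _ => 1 := by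
    funext u; simp
  rw [h]
  exact withDensity_one

lemma pB_one (ν : Measure ℝ) :
    powerBias 1 ν = ν.withDensity (fun x => ENNReal.ofReal (x / ∫ y, y ∂ν)) := by
  unfold powerBias
  simp only [Real.rpow_one]

lemma ae_nonneg (ν : Measure ℝ) (h : ν (Set.Iio 0) = 0) : ∀ᵐ x ∂ν, 0 ≤ x := by
  rw [ae_iff]
  simp only [not_le]
  exact h

lemma pB_one_prob (ν : Measure ℝ) [IsProbabilityMeasure ν] (hν0 : ν (Set.Iio 0) = 0)
    (hi : Integrable id ν) (hM : 0 < ∫ x, x ∂ν) :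
    IsProbabilityMeasure (powerBias 1 ν) := by
  constructor
  have hi' : Integrable (fun x : ℝ => x / ∫ y, y ∂ν) ν := hi.div_const _
  rw [pB_one, withDensity_apply _ MeasurableSet.univ, Measure.restrict_univ,
    ← ofReal_integral_eq_lintegral_ofReal hi'
      ((ae_nonneg ν hν0).mono fun x hx => div_nonneg hx hM.le)]
  rw [integral_div, div_self hM.ne', ENNReal.ofReal_one]

lemma mconv_apply (κ ρ : Measure ℝ) [SFinite κ] [SFinite ρ] {A : Set ℝ}
    (hA : MeasurableSet A) :
    mconv κ ρ A = ∫⁻ s, ρ ((fun y => s + y) ⁻¹' A) ∂κ := by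
  unfold mconv
  rw [Measure.map_apply (f := fun p : ℝ × ℝ => p.1 + p.2) (measurable_fst.add measurable_snd) hA,
    Measure.prod_apply (show MeasurableSet ((fun p : ℝ × ℝ => p.1 + p.2) ⁻¹' A) from
      (measurable_fst.add measurable_snd) hA)]
  rfl

lemma measurable_phi (A : Set ℝ) : Measurable (fun x : ℝ => volume (A ∩ Set.Ioc 0 x)) :=
  Monotone.measurable fun a b hab =>
    measure_mono (Set.inter_subset_inter_right _ (Set.Ioc_subset_Ioc_right hab))

lemma phi_ne_top (A : Set ℝ) (x : ℝ) : volume (A ∩ Set.Ioc 0 x) ≠ ⊤ :=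
  ((measure_mono Set.inter_subset_right).trans_lt measure_Ioc_lt_top).ne

lemma phi_add {A : Set ℝ} (hA : MeasurableSet A) {s x : ℝ} (hs : 0 ≤ s) (hx : 0 ≤ x) :
    volume (A ∩ Set.Ioc 0 (s + x))
      = volume (A ∩ Set.Ioc 0 s) + volume (A ∩ Set.Ioc s (s + x)) := by
  have hdisj : Disjoint (A ∩ Set.Ioc 0 s) (A ∩ Set.Ioc s (s + x)) := by
    refine Set.disjoint_left.2 fun y hy1 hy2 => ?_
    exact absurd hy2.2.1 (not_lt.2 hy1.2.2)
  rw [← Set.Ioc_union_Ioc_eq_Ioc hs (le_add_of_nonneg_right hx),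
    Set.inter_union_distrib_left, measure_union hdisj (hA.inter measurableSet_Ioc)]

/-- Key formula: value of the `(1,1)`-equilibrium transform on a measurable set. -/
lemma eqLaw_one_apply (ν : Measure ℝ) [IsProbabilityMeasure ν] (hν0 : ν (Set.Iio 0) = 0)
    (hi : Integrable id ν) (hM : 0 < ∫ x, x ∂ν) {A : Set ℝ} (hA : MeasurableSet A) :
    eqLaw 1 1 ν A
      = (ENNReal.ofReal (∫ x, x ∂ν))⁻¹ * ∫⁻ x, volume (A ∩ Set.Ioc 0 x) ∂ν := by
  set M : ℝ := ∫ x, x ∂ν with hMdef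
  haveI hpBP : IsProbabilityMeasure (powerBias 1 ν) := pB_one_prob ν hν0 hi hM
  have hmul : Measurable fun p : ℝ × ℝ => p.1 * p.2 := measurable_fst.mul measurable_snd
  unfold eqLaw
  rw [vLaw_one, Measure.map_apply hmul hA, Measure.prod_apply (hmul hA)]
  have hstep : ∀ u : ℝ,
      powerBias 1 ν (Prod.mk u ⁻¹' ((fun p : ℝ × ℝ => p.1 * p.2) ⁻¹' A))
        = ∫⁻ x, A.indicator (1 : ℝ → ℝ≥0∞) (u * x) * ENNReal.ofReal (x / M) ∂ν := by
    intro u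
    have hpre : MeasurableSet ((fun x : ℝ => u * x) ⁻¹' A) :=
      (measurable_const_mul u) hA
    rw [pB_one,
      show Prod.mk u ⁻¹' ((fun p : ℝ × ℝ => p.1 * p.2) ⁻¹' A)
        = (fun x : ℝ => u * x) ⁻¹' A from rfl,
      withDensity_apply _ hpre, ← lintegral_indicator hpre]
    refine lintegral_congr fun x => ?_
    by_cases hx : u * x ∈ A <;> simp [Set.indicator_apply, hx, hMdef]
  rw [lintegral_congr hstep]
  have hFmeas : Measurable fun p : ℝ × ℝ =>
      A.indicator (1 : ℝ → ℝ≥0∞) (p.1 * p.2) * ENNReal.ofReal (p.2 / M) :=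
    ((measurable_one.indicator hA).comp hmul).mul
      (ENNReal.measurable_ofReal.comp (measurable_snd.div_const M))
  rw [lintegral_lintegral_swap hFmeas.aemeasurable]
  have hinner : ∀ᵐ x ∂ν,
      (∫⁻ u in Set.Ioc (0:ℝ) 1,
          A.indicator (1 : ℝ → ℝ≥0∞) (u * x) * ENNReal.ofReal (x / M) ∂volume)
        = (ENNReal.ofReal M)⁻¹ * volume (A ∩ Set.Ioc 0 x) := by
    filter_upwards [ae_nonneg ν hν0] with x hx
    rcases eq_or_lt_of_le hx with hx0 | hxpos
    · simp [← hx0, Set.Ioc_self]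
    · have hind : ∀ u : ℝ, A.indicator (1 : ℝ → ℝ≥0∞) (u * x)
          = ((fun u : ℝ => u * x) ⁻¹' A).indicator (1 : ℝ → ℝ≥0∞) u := by
        intro u
        by_cases h : u * x ∈ A <;> simp [Set.indicator_apply, h, Set.mem_preimage]
      simp only [hind]
      rw [lintegral_mul_const' _ _ ENNReal.ofReal_ne_top,
        lintegral_indicator_one ((measurable_mul_const x) hA),
        Measure.restrict_apply ((measurable_mul_const x) hA)]
      have hset : (fun u : ℝ => u * x) ⁻¹' A ∩ Set.Ioc 0 1
          = (fun u : ℝ => u * x) ⁻¹' (A ∩ Set.Ioc 0 x) := by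
        ext u
        simp only [Set.mem_inter_iff, Set.mem_preimage, Set.mem_Ioc]
        constructor
        · rintro ⟨h1, h2, h3⟩
          exact ⟨h1, mul_pos h2 hxpos, by nlinarith⟩
        · rintro ⟨h1, h2, h3⟩
          refine ⟨h1, ?_, ?_⟩ <;> nlinarith
      rw [hset, Real.volume_preimage_mul_right hxpos.ne']
      rw [abs_of_pos (inv_pos.2 hxpos), div_eq_mul_inv,
        ENNReal.ofReal_mul hx, ENNReal.ofReal_inv_of_pos hxpos,
        ENNReal.ofReal_inv_of_pos hM]
      have hxne : ENNReal.ofReal x ≠ 0 := (ENNReal.ofReal_pos.2 hxpos).ne'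
      calc (ENNReal.ofReal x)⁻¹ * volume (A ∩ Set.Ioc 0 x)
            * (ENNReal.ofReal x * (ENNReal.ofReal M)⁻¹)
          = ((ENNReal.ofReal x)⁻¹ * ENNReal.ofReal x)
              * ((ENNReal.ofReal M)⁻¹ * volume (A ∩ Set.Ioc 0 x)) := by ring
        _ = (ENNReal.ofReal M)⁻¹ * volume (A ∩ Set.Ioc 0 x) := by
            rw [ENNReal.inv_mul_cancel hxne ENNReal.ofReal_ne_top, one_mul]
  rw [lintegral_congr_ae hinner,
    lintegral_const_mul' _ _ (ENNReal.inv_ne_top.2 (ENNReal.ofReal_pos.2 hM).ne')]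

lemma sumLaw_prob (μ : Measure ℝ) [IsProbabilityMeasure μ] (n : ℕ) :
    IsProbabilityMeasure (sumLaw μ n) := by
  induction n with
  | zero =>
    show IsProbabilityMeasure (Measure.dirac (0:ℝ))
    infer_instance
  | succ k ih =>
    haveI := ih
    show IsProbabilityMeasure (mconv (sumLaw μ k) μ)
    unfold mconv
    exact Measure.isProbabilityMeasure_map (measurable_fst.add measurable_snd).aemeasurable

lemma sumLaw_supp (μ : Measure ℝ) [IsProbabilityMeasure μ] (hsupp : μ (Set.Iio 0) = 0) (n : ℕ) :
    (sumLaw μ n) (Set.Iio 0) = 0 := by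
  induction n with
  | zero =>
    show Measure.dirac (0:ℝ) (Set.Iio 0) = 0
    simp
  | succ k ih =>
    haveI := sumLaw_prob μ k
    show mconv (sumLaw μ k) μ (Set.Iio 0) = 0
    rw [mconv_apply _ _ measurableSet_Iio]
    have h : ∀ᵐ s ∂(sumLaw μ k), μ ((fun y => s + y) ⁻¹' Set.Iio 0) = 0 := by
      filter_upwards [ae_nonneg _ ih] with s hs
      refine measure_mono_null (fun y hy => ?_) hsupp
      simp only [Set.mem_preimage, Set.mem_Iio] at hy ⊢
      linarith
    rw [lintegral_congr_ae h, lintegral_zero]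

lemma sumLaw_zero (μ : Measure ℝ) : sumLaw μ 0 = Measure.dirac 0 := rfl

lemma sumLaw_succ (μ : Measure ℝ) (k : ℕ) : sumLaw μ (k + 1) = mconv (sumLaw μ k) μ := rfl

lemma sumLaw_integrable (μ : Measure ℝ) [IsProbabilityMeasure μ]
    (hi : Integrable id μ) (n : ℕ) :
    Integrable id (sumLaw μ n) ∧ ∫ x, x ∂(sumLaw μ n) = n * ∫ x, x ∂μ := by
  induction n with
  | zero =>
    rw [sumLaw_zero]
    constructor
    · have h0 : ∀ᵐ x ∂(Measure.dirac (0:ℝ)), x = 0 := by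
        rw [MeasureTheory.ae_dirac_eq]
        exact Filter.eventually_pure.2 rfl
      exact (integrable_const (0:ℝ)).congr (h0.mono fun x hx => hx.symm)
    · rw [integral_dirac]
      simp
  | succ k ih =>
    haveI := sumLaw_prob μ k
    have haddm : Measurable fun p : ℝ × ℝ => p.1 + p.2 := measurable_fst.add measurable_snd
    set P := (sumLaw μ k).prod μ with hP
    have hmapf : Measure.map Prod.fst P = sumLaw μ k := by
      rw [Measure.map_fst_prod, measure_univ, one_smul]
    have hmaps : Measure.map Prod.snd P = μ := by
      rw [Measure.map_snd_prod, measure_univ, one_smul]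
    have h1 : Integrable (fun p : ℝ × ℝ => p.1) P := by
      have h := (integrable_map_measure (f := Prod.fst) (g := fun x : ℝ => x)
        (by rw [hmapf]; exact measurable_id.aestronglyMeasurable)
        measurable_fst.aemeasurable).mp
      exact h (by rw [hmapf]; exact ih.1)
    have h2 : Integrable (fun p : ℝ × ℝ => p.2) P := by
      have h := (integrable_map_measure (f := Prod.snd) (g := fun x : ℝ => x)
        (by rw [hmaps]; exact measurable_id.aestronglyMeasurable)
        measurable_snd.aemeasurable).mp
      exact h (by rw [hmaps]; exact hi)
    have hsum : Integrable (fun p : ℝ × ℝ => p.1 + p.2) P := h1.add h2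
    have e2 : ∫ p : ℝ × ℝ, p.1 ∂P = ∫ x, x ∂(sumLaw μ k) := by
      have h := integral_map (φ := Prod.fst) (μ := P) measurable_fst.aemeasurable
        (f := fun x : ℝ => x) (by rw [hmapf]; exact measurable_id.aestronglyMeasurable)
      rw [hmapf] at h
      exact h.symm
    have e3 : ∫ p : ℝ × ℝ, p.2 ∂P = ∫ x, x ∂μ := by
      have h := integral_map (φ := Prod.snd) (μ := P) measurable_snd.aemeasurable
        (f := fun x : ℝ => x) (by rw [hmaps]; exact measurable_id.aestronglyMeasurable)
      rw [hmaps] at h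
      exact h.symm
    constructor
    · rw [sumLaw_succ]
      unfold mconv
      exact (integrable_map_measure measurable_id.aestronglyMeasurable
        haddm.aemeasurable).mpr hsum
    · rw [sumLaw_succ]
      unfold mconv
      have h := integral_map (φ := fun p : ℝ × ℝ => p.1 + p.2) (μ := P)
        haddm.aemeasurable (f := fun x : ℝ => x) measurable_id.aestronglyMeasurable
      rw [h, integral_add h1 h2, e2, e3, ih.2]
      push_cast
      ring

lemma sumLaw_telescope (μ : Measure ℝ) [IsProbabilityMeasure μ]
    (hsupp : μ (Set.Iio 0) = 0) {A : Set ℝ} (hA : MeasurableSet A) (k : ℕ) :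
    ∫⁻ S, volume (A ∩ Set.Ioc 0 S) ∂(sumLaw μ k)
      = ∑ i ∈ Finset.range k,
          ∫⁻ s, ∫⁻ x, volume (A ∩ Set.Ioc s (s + x)) ∂μ ∂(sumLaw μ i) := by
  induction k with
  | zero =>
    show ∫⁻ S, volume (A ∩ Set.Ioc 0 S) ∂(Measure.dirac (0:ℝ)) = _
    rw [lintegral_dirac' _ (measurable_phi A)]
    simp [Set.Ioc_self]
  | succ k ih =>
    haveI := sumLaw_prob μ k
    have haddm : Measurable fun p : ℝ × ℝ => p.1 + p.2 := measurable_fst.add measurable_snd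
    show ∫⁻ S, volume (A ∩ Set.Ioc 0 S) ∂(mconv (sumLaw μ k) μ) = _
    unfold mconv
    rw [lintegral_map (measurable_phi A) haddm,
      lintegral_prod (fun p : ℝ × ℝ => volume (A ∩ Set.Ioc 0 (p.1 + p.2))) (((measurable_phi A).comp haddm).aemeasurable)]
    have hcongr : ∀ᵐ s ∂(sumLaw μ k),
        (∫⁻ x, volume (A ∩ Set.Ioc 0 (s + x)) ∂μ)
          = volume (A ∩ Set.Ioc 0 s) + ∫⁻ x, volume (A ∩ Set.Ioc s (s + x)) ∂μ := by
      filter_upwards [ae_nonneg _ (sumLaw_supp μ hsupp k)] with s hs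
      have h1 : ∫⁻ x, volume (A ∩ Set.Ioc 0 (s + x)) ∂μ
          = ∫⁻ x, (volume (A ∩ Set.Ioc 0 s) + volume (A ∩ Set.Ioc s (s + x))) ∂μ :=
        lintegral_congr_ae ((ae_nonneg μ hsupp).mono fun x hx => phi_add hA hs hx)
      rw [h1, lintegral_add_left measurable_const, lintegral_const, measure_univ, mul_one]
    rw [lintegral_congr_ae hcongr, lintegral_add_left (measurable_phi A), ih,
      Finset.sum_range_succ]

end Aux

/-- Equilibrium transform of an i.i.d. sum: `S* =d X₁ + ⋯ + X_{I-1} + X_I*` with `I`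
uniform on `{1,…,n}` independent of everything. -/
theorem stmt11 (μ : Measure ℝ) [IsProbabilityMeasure μ] (n : ℕ) (hn : 1 ≤ n)
    (hsupp : μ (Set.Iio 0) = 0) (hint : Integrable id μ) (hmean : 0 < ∫ x, x ∂μ) :
    eqLaw 1 1 (sumLaw μ n)
      = ((n : ENNReal))⁻¹ • ∑ i ∈ Finset.range n, mconv (sumLaw μ i) (eqLaw 1 1 μ) := by
  haveI hSn := sumLaw_prob μ n
  obtain ⟨hintS, hMS⟩ := sumLaw_integrable μ hint n
  have hsuppS := sumLaw_supp μ hsupp n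
  have hMSpos : 0 < ∫ x, x ∂(sumLaw μ n) := by
    rw [hMS]
    have : (1:ℝ) ≤ (n:ℝ) := by exact_mod_cast hn
    nlinarith
  haveI heq : IsProbabilityMeasure (eqLaw 1 1 μ) := by
    unfold eqLaw
    haveI := pB_one_prob μ hsupp hint hmean
    haveI : IsProbabilityMeasure (vLaw 1) := by
      rw [vLaw_one]
      exact ⟨by simp⟩
    exact Measure.isProbabilityMeasure_map (measurable_fst.mul measurable_snd).aemeasurable
  ext A hA
  rw [eqLaw_one_apply (sumLaw μ n) hsuppS hintS hMSpos hA, sumLaw_telescope μ hsupp hA n,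
    Measure.smul_apply, Measure.finset_sum_apply, smul_eq_mul]
  have hterm : ∀ i ∈ Finset.range n,
      mconv (sumLaw μ i) (eqLaw 1 1 μ) A
        = (ENNReal.ofReal (∫ x, x ∂μ))⁻¹
            * ∫⁻ s, ∫⁻ x, volume (A ∩ Set.Ioc s (s + x)) ∂μ ∂(sumLaw μ i) := by
    intro i _
    haveI := sumLaw_prob μ i
    rw [mconv_apply _ _ hA]
    have hptwise : ∀ s : ℝ, eqLaw 1 1 μ ((fun y => s + y) ⁻¹' A)
        = (ENNReal.ofReal (∫ x, x ∂μ))⁻¹ * ∫⁻ x, volume (A ∩ Set.Ioc s (s + x)) ∂μ := by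
      intro s
      rw [eqLaw_one_apply μ hsupp hint hmean ((measurable_const_add s) hA)]
      congr 1
      refine lintegral_congr fun x => ?_
      have hset : (fun y => s + y) ⁻¹' A ∩ Set.Ioc 0 x
          = (fun y => s + y) ⁻¹' (A ∩ Set.Ioc s (s + x)) := by
        ext y
        simp only [Set.mem_inter_iff, Set.mem_preimage, Set.mem_Ioc]
        constructor
        · rintro ⟨h1, h2, h3⟩
          exact ⟨h1, by linarith, by linarith⟩
        · rintro ⟨h1, h2, h3⟩
          exact ⟨h1, by linarith, by linarith⟩
      rw [hset, measure_preimage_add]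
    rw [lintegral_congr hptwise,
      lintegral_const_mul' _ _ (ENNReal.inv_ne_top.2 (ENNReal.ofReal_pos.2 hmean).ne')]
  rw [Finset.sum_congr rfl hterm, ← Finset.mul_sum, hMS]
  rw [ENNReal.ofReal_mul (by positivity : (0:ℝ) ≤ (n:ℝ)), ENNReal.ofReal_natCast,
    ENNReal.mul_inv (Or.inr ENNReal.ofReal_ne_top) (Or.inl (ENNReal.natCast_ne_top n)),
    mul_assoc]
end

section
/- Let X, X₁, X₂, … be i.i.d. nonnegative random variables with finite positive mean, and let L be a positive-integer-valued random variable with finite mean, independent of the Xᵢ. If X* ⪯ X and L^e ⪯ L (i.e., X and L are NBUE), then the random sum S = Σ_{k=1}^L X_k satisfies S* ⪯ S, i.e., S is NBUE. -/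
open MeasureTheory

/-- Law of the random sum `S = Σ_{k=1}^L X_k` with `L ~ ν` independent of the i.i.d. `Xᵢ ~ μ`. -/
noncomputable def randSumLaw (μ : Measure ℝ) (ν : Measure ℕ) : Measure ℝ :=
  Measure.sum (fun k => ν {k} • sumLaw μ k)

section S12Aux
open Set
open scoped ENNReal

namespace S12


lemma meas_mul2 : Measurable fun p : ℝ × ℝ => p.1 * p.2 := measurable_fst.mul measurable_snd
lemma meas_add2 : Measurable fun p : ℝ × ℝ => p.1 + p.2 := measurable_fst.add measurable_snd
lemma msTail (t : ℝ) : MeasurableSet {x : ℝ | t < x} := measurableSet_Ioi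
lemma msSlice (u t : ℝ) : MeasurableSet {x : ℝ | t < u * x} :=
  (measurable_const_mul u) measurableSet_Ioi

lemma vLaw_one : vLaw 1 = volume.restrict (Set.Ioc 0 1) := by
  unfold vLaw
  have h : (fun u : ℝ => ENNReal.ofReal (1 * u ^ ((1:ℝ) - 1))) = fun _ => 1 := by
    funext u; norm_num
  rw [h]
  exact withDensity_one

lemma ind_mul (S : Set ℝ) (f : ℝ → ℝ≥0∞) (x : ℝ) : S.indicator f x = f x * S.indicator 1 x := by
  by_cases h : x ∈ S <;> simp [h]

lemma ae_nonneg (σ : Measure ℝ) (h : σ (Set.Iio 0) = 0) : ∀ᵐ x ∂σ, 0 ≤ x := by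
  rw [ae_iff]
  convert h using 2
  ext x; simp [not_le]

/-- tail of eqLaw as double integral -/
lemma eqLaw_tail (σ : Measure ℝ) [SFinite σ] (t : ℝ) :
    eqLaw 1 1 σ {x | t < x}
      = ∫⁻ u in Set.Ioc (0:ℝ) 1, ∫⁻ x,
          ENNReal.ofReal (x / ∫ y, y ∂σ) * Set.indicator {x | t < u * x} 1 x ∂σ := by
  have hd : (fun x : ℝ => ENNReal.ofReal (x ^ (1:ℝ) / ∫ y, y ^ (1:ℝ) ∂σ))
      = fun x => ENNReal.ofReal (x / ∫ y, y ∂σ) := by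
    funext x; simp [Real.rpow_one]
  rw [eqLaw, powerBias, hd, Measure.map_apply meas_mul2 (msTail t),
    Measure.prod_apply (meas_mul2 (msTail t)), vLaw_one]
  refine lintegral_congr fun u => ?_
  have : (Prod.mk u ⁻¹' ((fun p : ℝ × ℝ => p.1 * p.2) ⁻¹' {x | t < x})) = {x : ℝ | t < u * x} := rfl
  rw [this, withDensity_apply _ (msSlice u t), ← lintegral_indicator (msSlice u t)]
  refine lintegral_congr fun x => ?_
  exact ind_mul _ _ x




lemma msSlice' (x t : ℝ) : MeasurableSet {u : ℝ | t < u * x} :=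
  (measurable_mul_const x) measurableSet_Ioi

noncomputable def J (σ : Measure ℝ) (t : ℝ) : ℝ≥0∞ :=
  ∫⁻ u in Set.Ioc (0:ℝ) 1, ∫⁻ x, ENNReal.ofReal x * Set.indicator {x | t < u * x} 1 x ∂σ

lemma meas_inner (u t : ℝ) :
    Measurable fun x : ℝ => ENNReal.ofReal x * Set.indicator {x | t < u * x} (1 : ℝ → ℝ≥0∞) x :=
  (ENNReal.measurable_ofReal.comp measurable_id).mul
    (Measurable.indicator measurable_const (msSlice u t))

lemma J_le (σ : Measure ℝ) (t : ℝ) : J σ t ≤ ∫⁻ x, ENNReal.ofReal x ∂σ := by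
  unfold J
  calc ∫⁻ u in Set.Ioc (0:ℝ) 1, ∫⁻ x, ENNReal.ofReal x * Set.indicator {x | t < u * x} 1 x ∂σ
      ≤ ∫⁻ _ in Set.Ioc (0:ℝ) 1, ∫⁻ x, ENNReal.ofReal x ∂σ := by
        refine lintegral_mono fun u => lintegral_mono fun x => ?_
        by_cases h : x ∈ {x : ℝ | t < u * x} <;> simp [h]
    _ = ∫⁻ x, ENNReal.ofReal x ∂σ := by
        rw [setLIntegral_const, Real.volume_Ioc]; norm_num

/-- compute the u-integral first -/
lemma J_swap (σ : Measure ℝ) [SFinite σ] (t : ℝ) :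
    J σ t = ∫⁻ x, ENNReal.ofReal x * volume ({u : ℝ | t < u * x} ∩ Set.Ioc 0 1) ∂σ := by
  unfold J
  have hmeas : Measurable (Function.uncurry fun (u x : ℝ) =>
      ENNReal.ofReal x * Set.indicator {q : ℝ × ℝ | t < q.1 * q.2} (1 : ℝ × ℝ → ℝ≥0∞) (u, x)) := by
    refine (ENNReal.measurable_ofReal.comp measurable_snd).mul ?_
    exact (Measurable.indicator measurable_const
      ((measurable_fst.mul measurable_snd) measurableSet_Ioi))
  have h1 : ∀ u x : ℝ, Set.indicator {x : ℝ | t < u * x} (1 : ℝ → ℝ≥0∞) x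
      = Set.indicator {q : ℝ × ℝ | t < q.1 * q.2} (1 : ℝ × ℝ → ℝ≥0∞) (u, x) := by
    intro u x
    by_cases h : t < u * x <;> simp [Set.indicator_apply, h]
  calc ∫⁻ u in Set.Ioc (0:ℝ) 1, ∫⁻ x, ENNReal.ofReal x * Set.indicator {x | t < u * x} 1 x ∂σ
      = ∫⁻ u in Set.Ioc (0:ℝ) 1, ∫⁻ x,
          ENNReal.ofReal x * Set.indicator {q : ℝ × ℝ | t < q.1 * q.2} 1 (u, x) ∂σ := by
        refine lintegral_congr fun u => lintegral_congr fun x => by rw [h1]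
    _ = ∫⁻ x, ∫⁻ u in Set.Ioc (0:ℝ) 1,
          ENNReal.ofReal x * Set.indicator {q : ℝ × ℝ | t < q.1 * q.2} 1 (u, x) ∂volume ∂σ :=
        lintegral_lintegral_swap hmeas.aemeasurable
    _ = ∫⁻ x, ENNReal.ofReal x * volume ({u : ℝ | t < u * x} ∩ Set.Ioc 0 1) ∂σ := by
        refine lintegral_congr fun x => ?_
        have h2 : ∀ u : ℝ, ENNReal.ofReal x * Set.indicator {q : ℝ × ℝ | t < q.1 * q.2} (1 : ℝ × ℝ → ℝ≥0∞) (u, x)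
            = ENNReal.ofReal x * Set.indicator {u : ℝ | t < u * x} (1 : ℝ → ℝ≥0∞) u := by
          intro u; by_cases h : t < u * x <;> simp [Set.indicator_apply, h]
        rw [lintegral_congr h2,
          lintegral_const_mul _ (Measurable.indicator measurable_one (msSlice' x t)),
          lintegral_indicator_one (msSlice' x t), Measure.restrict_apply (msSlice' x t)]



lemma key_pt {x : ℝ} (hx : 0 ≤ x) (r : ℝ) :
    ENNReal.ofReal x * volume ({u : ℝ | r < u * x} ∩ Set.Ioc 0 1)
      = ENNReal.ofReal (x - r) - ENNReal.ofReal (-r) := by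
  rcases eq_or_lt_of_le hx with h0 | hxpos
  · rw [← h0]
    simp [zero_sub]
  · have hset : {u : ℝ | r < u * x} = Set.Ioi (r / x) := by
      ext u; rw [Set.mem_setOf_eq, Set.mem_Ioi, div_lt_iff₀ hxpos]
    have hset2 : Set.Ioi (r / x) ∩ Set.Ioc (0:ℝ) 1 = Set.Ioc (max (r/x) 0) 1 := by
      ext u
      simp only [Set.mem_inter_iff, Set.mem_Ioi, Set.mem_Ioc, max_lt_iff]
      tauto
    rw [hset, hset2, Real.volume_Ioc]
    rcases le_or_gt r 0 with hr | hr
    · have hmax : max (r / x) 0 = 0 := max_eq_right (div_nonpos_of_nonpos_of_nonneg hr hx)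
      have hrhs : ENNReal.ofReal (x - r) - ENNReal.ofReal (-r) = ENNReal.ofReal x := by
        rw [← ENNReal.ofReal_sub _ (neg_nonneg.mpr hr)]
        congr 1; ring
      rw [hmax, hrhs]
      norm_num
    · have hmax : max (r / x) 0 = r / x := max_eq_left (le_of_lt (div_pos hr hxpos))
      rw [hmax, ← ENNReal.ofReal_mul hx]
      have : x * (1 - r / x) = x - r := by field_simp
      rw [this]
      have : ENNReal.ofReal (-r) = 0 := ENNReal.ofReal_of_nonpos (by linarith)
      rw [this, tsub_zero]

lemma pt2 {x : ℝ} (hx : 0 ≤ x) (s t : ℝ) :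
    ENNReal.ofReal (s + x - t)
      = ENNReal.ofReal (s - t)
        + ENNReal.ofReal x * volume ({u : ℝ | t - s < u * x} ∩ Set.Ioc 0 1) := by
  rw [key_pt hx (t - s)]
  have h1 : x - (t - s) = s + x - t := by ring
  have h2 : -(t - s) = s - t := by ring
  rw [h1, h2]
  exact (add_tsub_cancel_of_le (ENNReal.ofReal_le_ofReal (by linarith))).symm


lemma J_eq (σ : Measure ℝ) [SFinite σ] (hsupp : σ (Set.Iio 0) = 0) {t : ℝ} (ht : 0 ≤ t) :
    J σ t = ∫⁻ x, ENNReal.ofReal (x - t) ∂σ := by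
  rw [J_swap]
  refine lintegral_congr_ae ?_
  filter_upwards [ae_nonneg σ hsupp] with x hx
  rw [key_pt hx t, ENNReal.ofReal_of_nonpos (by linarith : -t ≤ 0), tsub_zero]

/-- tail of eqLaw as `J` over mean -/
lemma eqLaw_tail' (σ : Measure ℝ) [SFinite σ] (hM : 0 < ∫ y, y ∂σ) (t : ℝ) :
    eqLaw 1 1 σ {x | t < x} = J σ t / ENNReal.ofReal (∫ y, y ∂σ) := by
  rw [eqLaw_tail σ t]
  have hpt : ∀ u x : ℝ, ENNReal.ofReal (x / ∫ y, y ∂σ) * Set.indicator {x | t < u * x} (1 : ℝ → ℝ≥0∞) x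
      = (ENNReal.ofReal x * Set.indicator {x | t < u * x} (1 : ℝ → ℝ≥0∞) x) * (ENNReal.ofReal (∫ y, y ∂σ))⁻¹ := by
    intro u x
    rw [ENNReal.ofReal_div_of_pos hM, ENNReal.div_eq_inv_mul]
    ring
  calc ∫⁻ u in Set.Ioc (0:ℝ) 1, ∫⁻ x, ENNReal.ofReal (x / ∫ y, y ∂σ) * Set.indicator {x | t < u * x} 1 x ∂σ
      = ∫⁻ u in Set.Ioc (0:ℝ) 1, (∫⁻ x, ENNReal.ofReal x * Set.indicator {x | t < u * x} 1 x ∂σ)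
          * (ENNReal.ofReal (∫ y, y ∂σ))⁻¹ := by
        refine lintegral_congr fun u => ?_
        rw [← lintegral_mul_const'' _ (meas_inner u t).aemeasurable]
        exact lintegral_congr fun x => hpt u x
    _ = J σ t * (ENNReal.ofReal (∫ y, y ∂σ))⁻¹ := by
        have hg : Measurable fun u : ℝ => ∫⁻ x, ENNReal.ofReal x * Set.indicator {x | t < u * x} 1 x ∂σ := by
          refine Measurable.lintegral_prod_right (f := fun (u x : ℝ) =>
            ENNReal.ofReal x * Set.indicator {x | t < u * x} 1 x) ?_
          have h1 : (Function.uncurry fun (u x : ℝ) =>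
              ENNReal.ofReal x * Set.indicator {x | t < u * x} (1 : ℝ → ℝ≥0∞) x)
              = fun q : ℝ × ℝ => ENNReal.ofReal q.2 * Set.indicator {q : ℝ × ℝ | t < q.1 * q.2} 1 q := by
            funext q
            by_cases h : t < q.1 * q.2 <;> simp [Function.uncurry, Set.indicator_apply, h]
          rw [h1]
          exact (ENNReal.measurable_ofReal.comp measurable_snd).mul
            (Measurable.indicator measurable_one ((measurable_fst.mul measurable_snd) measurableSet_Ioi))
        rw [lintegral_mul_const'' _ hg.aemeasurable]
        rfl
    _ = J σ t / ENNReal.ofReal (∫ y, y ∂σ) := by rw [ENNReal.div_eq_inv_mul]; ring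


lemma mconv_lintegral (ρ μ : Measure ℝ) [SFinite μ] {f : ℝ → ℝ≥0∞} (hf : Measurable f) :
    ∫⁻ y, f y ∂(mconv ρ μ) = ∫⁻ s, ∫⁻ x, f (s + x) ∂μ ∂ρ := by
  rw [mconv, lintegral_map hf meas_add2]
  exact lintegral_prod _ ((hf.comp meas_add2).aemeasurable)

lemma mconv_apply (ρ μ : Measure ℝ) [SFinite μ] {S : Set ℝ} (hS : MeasurableSet S) :
    mconv ρ μ S = ∫⁻ s, μ {x | s + x ∈ S} ∂ρ := by
  rw [mconv, Measure.map_apply meas_add2 hS, Measure.prod_apply (meas_add2 hS)]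
  rfl

lemma sumLaw_prob (μ : Measure ℝ) [IsProbabilityMeasure μ] (n : ℕ) :
    IsProbabilityMeasure (sumLaw μ n) := by
  induction n with
  | zero => exact Measure.dirac.isProbabilityMeasure
  | succ n ih =>
    show IsProbabilityMeasure (mconv (sumLaw μ n) μ)
    haveI := ih
    exact Measure.isProbabilityMeasure_map meas_add2.aemeasurable

lemma sumLaw_supp (μ : Measure ℝ) [IsProbabilityMeasure μ] (hsupp : μ (Set.Iio 0) = 0) (n : ℕ) :
    sumLaw μ n (Set.Iio 0) = 0 := by
  induction n with
  | zero =>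
    rw [show sumLaw μ 0 = Measure.dirac 0 from rfl, Measure.dirac_apply' _ measurableSet_Iio]
    simp
  | succ n ih =>
    rw [show sumLaw μ (n+1) = mconv (sumLaw μ n) μ from rfl, mconv_apply _ _ measurableSet_Iio]
    have h : ∀ᵐ s ∂(sumLaw μ n), μ {x | s + x ∈ Set.Iio 0} = 0 := by
      filter_upwards [ae_nonneg _ ih] with s hs
      refine measure_mono_null ?_ hsupp
      intro x hx
      simp only [Set.mem_setOf_eq, Set.mem_Iio] at hx ⊢
      linarith
    rw [lintegral_congr_ae h, lintegral_zero]

lemma sumLaw_mean (μ : Measure ℝ) [IsProbabilityMeasure μ] (hsupp : μ (Set.Iio 0) = 0) (n : ℕ) :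
    ∫⁻ x, ENNReal.ofReal x ∂(sumLaw μ n) = n * ∫⁻ x, ENNReal.ofReal x ∂μ := by
  induction n with
  | zero => simp [show sumLaw μ 0 = Measure.dirac 0 from rfl, lintegral_dirac]
  | succ n ih =>
    haveI := sumLaw_prob μ n
    rw [show sumLaw μ (n+1) = mconv (sumLaw μ n) μ from rfl,
      mconv_lintegral _ _ ENNReal.measurable_ofReal]
    have h : ∀ᵐ s ∂(sumLaw μ n), ∫⁻ x, ENNReal.ofReal (s + x) ∂μ
        = ENNReal.ofReal s + ∫⁻ x, ENNReal.ofReal x ∂μ := by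
      filter_upwards [ae_nonneg _ (sumLaw_supp μ hsupp n)] with s hs
      have h2 : ∀ᵐ x ∂μ, ENNReal.ofReal (s + x) = ENNReal.ofReal s + ENNReal.ofReal x := by
        filter_upwards [ae_nonneg _ hsupp] with x hx
        exact ENNReal.ofReal_add hs hx
      rw [lintegral_congr_ae h2, lintegral_add_left measurable_const, lintegral_const,
        measure_univ, mul_one]
    rw [lintegral_congr_ae h, lintegral_add_right _ measurable_const, lintegral_const,
      measure_univ, mul_one]
    have hm : Measurable fun s : ℝ => ENNReal.ofReal s := ENNReal.measurable_ofReal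
    rw [ih]
    push_cast
    ring


lemma tail_one (μ : Measure ℝ) [IsProbabilityMeasure μ] (hsupp : μ (Set.Iio 0) = 0) :
    μ {x : ℝ | 0 ≤ x} = 1 := by
  have h := measure_compl (μ := μ) (measurableSet_Iio (a := (0:ℝ))) (measure_ne_top μ _)
  rw [hsupp, measure_univ, tsub_zero] at h
  rw [← h]
  congr 1
  ext x; simp [not_lt]

lemma G_mono (μ : Measure ℝ) [IsProbabilityMeasure μ] (hsupp : μ (Set.Iio 0) = 0) (n : ℕ) (t : ℝ) :
    sumLaw μ n {x | t < x} ≤ sumLaw μ (n + 1) {x | t < x} := by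
  rw [show sumLaw μ (n+1) = mconv (sumLaw μ n) μ from rfl, mconv_apply _ _ (msTail t)]
  have h1 : sumLaw μ n {x | t < x} = ∫⁻ s, Set.indicator {x : ℝ | t < x} 1 s ∂(sumLaw μ n) :=
    (lintegral_indicator_one (msTail t)).symm
  rw [h1]
  refine lintegral_mono fun s => ?_
  by_cases h : t < s
  · have : μ {x : ℝ | 0 ≤ x} ≤ μ {x | s + x ∈ {y : ℝ | t < y}} := by
      refine measure_mono fun x hx => ?_
      simp only [Set.mem_setOf_eq] at hx ⊢
      linarith
    simpa [Set.indicator_apply, h, tail_one μ hsupp] using this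
  · simp [Set.indicator_apply, h]

section Arec

variable (μ : Measure ℝ) [IsProbabilityMeasure μ]

/-- expected overshoot of the n-fold sum -/
noncomputable def A (t : ℝ) (n : ℕ) : ℝ≥0∞ := ∫⁻ x, ENNReal.ofReal (x - t) ∂(sumLaw μ n)

lemma A_step (hsupp : μ (Set.Iio 0) = 0)
    (hm' : ∫⁻ x, ENNReal.ofReal x ∂μ ≠ ⊤)
    (hJX : ∀ r : ℝ, J μ r ≤ μ {x | r < x} * ∫⁻ x, ENNReal.ofReal x ∂μ) (n : ℕ) (t : ℝ) :
    A μ t (n + 1) ≤ A μ t n + (∫⁻ x, ENNReal.ofReal x ∂μ) * sumLaw μ (n + 1) {x | t < x} := by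
  haveI := sumLaw_prob μ n
  set m' := ∫⁻ x, ENNReal.ofReal x ∂μ with hm'def
  have hmeasf : Measurable fun y : ℝ => ENNReal.ofReal (y - t) :=
    ENNReal.measurable_ofReal.comp (measurable_id.sub measurable_const)
  have step1 : A μ t (n + 1) = ∫⁻ s, (ENNReal.ofReal (s - t) + J μ (t - s)) ∂(sumLaw μ n) := by
    rw [show A μ t (n+1) = ∫⁻ y, ENNReal.ofReal (y - t) ∂(mconv (sumLaw μ n) μ) from rfl,
      mconv_lintegral _ _ hmeasf]
    refine lintegral_congr fun s => ?_
    have hinner : ∀ᵐ x ∂μ, ENNReal.ofReal (s + x - t)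
        = ENNReal.ofReal (s - t) + ENNReal.ofReal x * volume ({u : ℝ | t - s < u * x} ∩ Set.Ioc 0 1) := by
      filter_upwards [ae_nonneg _ hsupp] with x hx
      exact pt2 hx s t
    rw [lintegral_congr_ae hinner, lintegral_add_left measurable_const, lintegral_const,
      measure_univ, mul_one, ← J_swap]
  rw [step1]
  have step2 : ∀ s : ℝ, ENNReal.ofReal (s - t) + J μ (t - s)
      ≤ ENNReal.ofReal (s - t) + m' * μ {x | s + x ∈ {y : ℝ | t < y}} := by
    intro s
    refine add_le_add_right ?_ _
    calc J μ (t - s) ≤ μ {x | t - s < x} * m' := hJX (t - s)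
      _ = m' * μ {x | s + x ∈ {y : ℝ | t < y}} := by
          rw [mul_comm]
          have hset : {x : ℝ | t - s < x} = {x : ℝ | s + x ∈ {y : ℝ | t < y}} := by
            ext x
            simp only [Set.mem_setOf_eq]
            constructor <;> intro h <;> linarith
          rw [hset]
  calc ∫⁻ s, (ENNReal.ofReal (s - t) + J μ (t - s)) ∂(sumLaw μ n)
      ≤ ∫⁻ s, (ENNReal.ofReal (s - t) + m' * μ {x | s + x ∈ {y : ℝ | t < y}}) ∂(sumLaw μ n) :=
        lintegral_mono step2
    _ = A μ t n + ∫⁻ s, m' * μ {x | s + x ∈ {y : ℝ | t < y}} ∂(sumLaw μ n) := by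
        rw [lintegral_add_left hmeasf]
        rfl
    _ = A μ t n + m' * sumLaw μ (n + 1) {x | t < x} := by
        rw [lintegral_const_mul' _ _ hm', ← mconv_apply _ _ (msTail t)]
        rfl

lemma A_bound (hsupp : μ (Set.Iio 0) = 0)
    (hm' : ∫⁻ x, ENNReal.ofReal x ∂μ ≠ ⊤)
    (hJX : ∀ r : ℝ, J μ r ≤ μ {x | r < x} * ∫⁻ x, ENNReal.ofReal x ∂μ)
    {t : ℝ} (ht : 0 ≤ t) (n : ℕ) :
    A μ t n ≤ (∫⁻ x, ENNReal.ofReal x ∂μ) * ∑ i ∈ Finset.range n, sumLaw μ (i + 1) {x | t < x} := by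
  induction n with
  | zero =>
    rw [show A μ t 0 = ∫⁻ x, ENNReal.ofReal (x - t) ∂(Measure.dirac 0) from rfl]
    simp only [lintegral_dirac]
    simp [ENNReal.ofReal_eq_zero]
    linarith
  | succ n ih =>
    calc A μ t (n + 1) ≤ A μ t n + (∫⁻ x, ENNReal.ofReal x ∂μ) * sumLaw μ (n + 1) {x | t < x} :=
          A_step μ hsupp hm' hJX n t
      _ ≤ (∫⁻ x, ENNReal.ofReal x ∂μ) * ∑ i ∈ Finset.range n, sumLaw μ (i + 1) {x | t < x}
            + (∫⁻ x, ENNReal.ofReal x ∂μ) * sumLaw μ (n + 1) {x | t < x} := add_le_add_left ih _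
      _ = (∫⁻ x, ENNReal.ofReal x ∂μ) * ∑ i ∈ Finset.range (n + 1), sumLaw μ (i + 1) {x | t < x} := by
          rw [Finset.sum_range_succ, mul_add]

end Arec


lemma nu_set (ν : Measure ℕ) (s : Set ℕ) :
    ν s = ∑' n, s.indicator (fun k => ν {k}) n := by
  have h : s = ⋃ n ∈ s, {n} := by ext; simp
  rw [← tsum_subtype]
  conv_lhs => rw [h]
  exact measure_biUnion s.to_countable
    (fun i _ j _ hij => by simpa [Function.onFun] using hij)
    (fun n _ => measurableSet_singleton n)

lemma nu_Ioi (ν : Measure ℕ) (k : ℕ) :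
    ν (Set.Ioi k) = ∑' n, if k < n then ν {n} else 0 := by
  rw [nu_set ν (Set.Ioi k)]
  exact tsum_congr fun n => by simp [Set.indicator_apply, Set.mem_Ioi]

lemma nu_total (ν : Measure ℕ) [IsProbabilityMeasure ν] : (∑' k, ν {k}) = 1 := by
  have h := (nu_set ν Set.univ).symm
  rw [measure_univ] at h
  rw [← h]
  exact tsum_congr fun n => by simp

lemma tsum_shift (f : ℕ → ℝ≥0∞) (h0 : f 0 = 0) : ∑' n, f n = ∑' n, f (n + 1) := by
  rw [tsum_eq_zero_add' ENNReal.summable, h0, zero_add]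

lemma Ioi_nat (k : ℕ) : Set.Ioi k = Set.Ici (k + 1) := by
  ext n; simp only [Set.mem_Ioi, Set.mem_Ici]; omega

/-- the Abel-summation comparison using NBUE of `L` -/
lemma abel (ν : Measure ℕ) [IsProbabilityMeasure ν] (hL0 : ν {0} = 0)
    (hL : ∀ k : ℕ, (∑' n : ℕ, if k < n then ν (Set.Ici n) else 0)
      ≤ (∑' j : ℕ, (j : ℝ≥0∞) * ν {j}) * ν (Set.Ioi k))
    (c : ℕ → ℝ≥0∞) (hmono : Monotone c) (hfin : ∀ i, c i ≠ ⊤) :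
    ∑' j, ν (Set.Ioi j) * c j ≤ (∑' j : ℕ, (j : ℝ≥0∞) * ν {j}) * ∑' j, ν {j + 1} * c j := by
  set Λ := ∑' j : ℕ, (j : ℝ≥0∞) * ν {j} with hΛ
  set d : ℕ → ℝ≥0∞ := fun i => c (i + 1) - c i with hd
  have hsum : ∀ j, (∑' i, if i < j then d i else 0) = ∑ i ∈ Finset.range j, d i := by
    intro j
    rw [tsum_eq_sum (s := Finset.range j) (fun b hb => by simp [Finset.mem_range] at hb; simp [hb])]
    exact Finset.sum_congr rfl fun i hi => by simp [Finset.mem_range.mp hi]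
  have hc' : ∀ j, c j = c 0 + ∑ i ∈ Finset.range j, d i := by
    intro j
    induction j with
    | zero => simp
    | succ j ihj =>
      rw [Finset.sum_range_succ, ← add_assoc, ← ihj, hd]
      exact (add_tsub_cancel_of_le (hmono (Nat.le_succ j))).symm
  have hc : ∀ j, c j = c 0 + ∑' i, if i < j then d i else 0 := fun j => by
    rw [hc' j, hsum j]
  -- expand both sides
  have hexp : ∀ (w : ℕ → ℝ≥0∞), (∑' j, w j * c j)
      = (∑' j, w j) * c 0 + ∑' i, (∑' j, if i < j then w j else 0) * d i := by
    intro w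
    calc ∑' j, w j * c j = ∑' j, (w j * c 0 + ∑' i, w j * (if i < j then d i else 0)) := by
          refine tsum_congr fun j => ?_
          rw [ENNReal.tsum_mul_left, ← mul_add, ← hc j]
      _ = (∑' j, w j * c 0) + ∑' j, ∑' i, w j * (if i < j then d i else 0) := ENNReal.tsum_add
      _ = (∑' j, w j) * c 0 + ∑' i, ∑' j, w j * (if i < j then d i else 0) := by
          rw [ENNReal.tsum_mul_right, ENNReal.tsum_comm]
      _ = (∑' j, w j) * c 0 + ∑' i, (∑' j, if i < j then w j else 0) * d i := by
          congr 1
          refine tsum_congr fun i => ?_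
          have hterm : ∀ j, w j * (if i < j then d i else 0) = (if i < j then w j else 0) * d i := by
            intro j; by_cases h : i < j <;> simp [h]
          rw [tsum_congr hterm, ENNReal.tsum_mul_right]
  have hIci : ∀ j : ℕ, ν (Set.Ioi j) = ν (Set.Ici (j + 1)) := fun j => by rw [Ioi_nat]
  -- bound for total tail sum
  have hA : (∑' j, ν (Set.Ioi j)) ≤ Λ := by
    have h1 : (∑' j, ν (Set.Ioi j)) = ∑' n, if 0 < n then ν (Set.Ici n) else 0 := by
      rw [tsum_shift (fun n => if 0 < n then ν (Set.Ici n) else 0) (by simp)]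
      exact tsum_congr fun j => by simp [hIci j]
    rw [h1]
    calc _ ≤ Λ * ν (Set.Ioi 0) := hL 0
      _ ≤ Λ * 1 := mul_le_mul_right (prob_le_one) _
      _ = Λ := mul_one Λ
  -- bound for partial tail sums
  have hT : ∀ i : ℕ, (∑' j, if i < j then ν (Set.Ioi j) else 0) ≤ Λ * ν (Set.Ioi (i + 1)) := by
    intro i
    have h1 : (∑' j, if i < j then ν (Set.Ioi j) else 0)
        = ∑' n, if i + 1 < n then ν (Set.Ici n) else 0 := by
      rw [tsum_shift (fun n => if i + 1 < n then ν (Set.Ici n) else 0) (by simp)]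
      refine tsum_congr fun j => ?_
      by_cases h : i < j <;> simp [h, Nat.add_lt_add_iff_right, hIci]
    rw [h1]
    exact hL (i + 1)
  -- singleton tail sums
  have hS1 : (∑' j, ν {j + 1}) = 1 := by
    rw [← tsum_shift (fun k => ν {k}) hL0]
    exact nu_total ν
  have hSi : ∀ i : ℕ, (∑' j, if i < j then ν {j + 1} else 0) = ν (Set.Ioi (i + 1)) := by
    intro i
    rw [nu_Ioi ν (i + 1), tsum_shift (fun n => if i + 1 < n then ν {n} else 0) (by simp)]
    refine tsum_congr fun j => ?_
    by_cases h : i < j <;> simp [h, Nat.add_lt_add_iff_right]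
  rw [hexp (fun j => ν (Set.Ioi j)), hexp (fun j => ν {j + 1}), hS1, one_mul, mul_add,
    ← ENNReal.tsum_mul_left]
  refine add_le_add (mul_le_mul_left hA _) (ENNReal.tsum_le_tsum fun i => ?_)
  rw [hSi i, ← mul_assoc]
  exact mul_le_mul_left (hT i) _


lemma integrable_id_of (σ : Measure ℝ) (hsupp : σ (Set.Iio 0) = 0)
    (h : ∫⁻ x, ENNReal.ofReal x ∂σ ≠ ⊤) : Integrable id σ := by
  refine ⟨measurable_id.aestronglyMeasurable, ?_⟩
  show (∫⁻ a, (‖id a‖₊ : ℝ≥0∞) ∂σ) < ⊤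
  simp only [id]
  have hae : ∀ᵐ x ∂σ, (‖x‖₊ : ℝ≥0∞) = ENNReal.ofReal x := by
    filter_upwards [ae_nonneg σ hsupp] with x hx
    exact Real.enorm_eq_ofReal hx
  rw [lintegral_congr_ae hae]
  exact lt_top_iff_ne_top.mpr h

lemma tsum_exchange (p g q : ℕ → ℝ≥0∞)
    (hq : ∀ i, q i = ∑' k, if i < k then p k else 0) :
    ∑' k, p k * ∑ i ∈ Finset.range k, g i = ∑' i, q i * g i := by
  have hsum : ∀ (f : ℕ → ℝ≥0∞) (k : ℕ),
      ∑ i ∈ Finset.range k, f i = ∑' i, if i < k then f i else 0 := by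
    intro f k
    rw [tsum_eq_sum (s := Finset.range k)
      (fun b hb => by simp [Finset.mem_range] at hb; simp [hb])]
    exact (Finset.sum_congr rfl fun i hi => by simp [Finset.mem_range.mp hi]).symm
  calc ∑' k, p k * ∑ i ∈ Finset.range k, g i
      = ∑' k, ∑' i, p k * (if i < k then g i else 0) := by
        refine tsum_congr fun k => ?_
        rw [ENNReal.tsum_mul_left, ← hsum g k]
    _ = ∑' i, ∑' k, p k * (if i < k then g i else 0) := ENNReal.tsum_comm
    _ = ∑' i, (∑' k, if i < k then p k else 0) * g i := by
        refine tsum_congr fun i => ?_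
        have h1 : ∀ k, p k * (if i < k then g i else 0) = (if i < k then p k else 0) * g i := by
          intro k; by_cases h : i < k <;> simp [h]
        rw [tsum_congr h1, ENNReal.tsum_mul_right]
    _ = ∑' i, q i * g i := tsum_congr fun i => by rw [hq i]

end S12


end S12Aux

/-- A random sum of NBUE-many i.i.d. NBUE summands is NBUE.
`X` NBUE means `X* ⪯ X`; `L` NBUE means `L^e ⪯ L`, encoded via
`P[L^e > k]·E L = Σ_{n>k} P[L ≥ n] ≤ E L · P[L > k]`. -/
theorem stmt12 (μ : Measure ℝ) [IsProbabilityMeasure μ] (ν : Measure ℕ)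
    [IsProbabilityMeasure ν]
    (hsupp : μ (Set.Iio 0) = 0) (hint : Integrable id μ) (hmean : 0 < ∫ x, x ∂μ)
    (hL0 : ν {0} = 0) (hLmean : (∑' k : ℕ, (k : ENNReal) * ν {k}) ≠ ⊤)
    (hX : ∀ t : ℝ, eqLaw 1 1 μ {x | t < x} ≤ μ {x | t < x})
    (hL : ∀ k : ℕ, (∑' n : ℕ, if k < n then ν (Set.Ici n) else 0)
      ≤ (∑' j : ℕ, (j : ENNReal) * ν {j}) * ν (Set.Ioi k)) :
    ∀ t : ℝ, eqLaw 1 1 (randSumLaw μ ν) {x | t < x} ≤ randSumLaw μ ν {x | t < x} := by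
  intro t
  set σ := randSumLaw μ ν with hσ
  have haeμ : ∀ᵐ x ∂μ, 0 ≤ x := S12.ae_nonneg μ hsupp
  set m' := ∫⁻ x, ENNReal.ofReal x ∂μ with hm'def
  have hm : ENNReal.ofReal (∫ x, x ∂μ) = m' := by
    have h := ofReal_integral_eq_lintegral_ofReal hint haeμ
    simpa [id] using h
  have hm0 : m' ≠ 0 := by
    rw [← hm]
    simp only [ne_eq, ENNReal.ofReal_eq_zero, not_le]
    exact hmean
  have hmtop : m' ≠ ⊤ := by rw [← hm]; exact ENNReal.ofReal_ne_top
  have hJX : ∀ r : ℝ, S12.J μ r ≤ μ {x | r < x} * m' := by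
    intro r
    have h2 := hX r
    rw [S12.eqLaw_tail' μ hmean r,
      ENNReal.div_le_iff (by rw [hm]; exact hm0) ENNReal.ofReal_ne_top] at h2
    rwa [hm] at h2
  haveI hσprob : IsProbabilityMeasure σ := by
    constructor
    rw [hσ, randSumLaw, Measure.sum_apply _ MeasurableSet.univ]
    have h : ∀ k, (ν {k} • sumLaw μ k) Set.univ = ν {k} := by
      intro k
      haveI := S12.sumLaw_prob μ k
      simp [Measure.smul_apply, measure_univ]
    rw [tsum_congr h, S12.nu_total ν]
  have hσsupp : σ (Set.Iio 0) = 0 := by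
    rw [hσ, randSumLaw, Measure.sum_apply _ measurableSet_Iio]
    simp [Measure.smul_apply, S12.sumLaw_supp μ hsupp]
  set Λ := ∑' k : ℕ, (k : ENNReal) * ν {k} with hΛdef
  have hΛ1 : (1 : ENNReal) ≤ Λ := by
    rw [← S12.nu_total ν]
    refine ENNReal.tsum_le_tsum fun k => ?_
    match k with
    | 0 => simp [hL0]
    | Nat.succ k =>
      refine le_mul_of_one_le_left (zero_le) ?_
      exact_mod_cast Nat.succ_le_succ (Nat.zero_le k)
  have hΛ0 : Λ ≠ 0 := fun h => by simp [h] at hΛ1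
  have hσlint : ∫⁻ x, ENNReal.ofReal x ∂σ = Λ * m' := by
    rw [hσ, randSumLaw, lintegral_sum_measure]
    have h : ∀ k : ℕ, ∫⁻ x, ENNReal.ofReal x ∂(ν {k} • sumLaw μ k)
        = ((k : ENNReal) * ν {k}) * m' := by
      intro k
      rw [lintegral_smul_measure, S12.sumLaw_mean μ hsupp k]
      ring
    rw [tsum_congr h, ENNReal.tsum_mul_right]
  have hMtop : Λ * m' ≠ ⊤ := ENNReal.mul_ne_top hLmean hmtop
  have hM0 : Λ * m' ≠ 0 := mul_ne_zero hΛ0 hm0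
  have hσint : Integrable id σ := S12.integrable_id_of σ hσsupp (by rw [hσlint]; exact hMtop)
  have haeσ : ∀ᵐ x ∂σ, 0 ≤ x := S12.ae_nonneg σ hσsupp
  have hMσ : ENNReal.ofReal (∫ y, y ∂σ) = Λ * m' := by
    have h := ofReal_integral_eq_lintegral_ofReal hσint haeσ
    simp only [id] at h
    rw [h, hσlint]
  have hMσpos : 0 < ∫ y, y ∂σ := by
    by_contra h
    push_neg at h
    rw [ENNReal.ofReal_eq_zero.mpr h] at hMσ
    exact hM0 hMσ.symm
  rw [S12.eqLaw_tail' σ hMσpos t, hMσ, ENNReal.div_le_iff hM0 hMtop]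
  have hTail : σ {x | t < x} = ∑' k, ν {k} * sumLaw μ k {x | t < x} := by
    rw [hσ, randSumLaw, Measure.sum_apply _ (S12.msTail t)]
    exact tsum_congr fun k => by rw [Measure.smul_apply, smul_eq_mul]
  by_cases ht : 0 ≤ t
  · -- main case
    have hJσ : S12.J σ t = ∑' k, ν {k} * S12.A μ t k := by
      rw [S12.J_eq σ hσsupp ht, hσ, randSumLaw, lintegral_sum_measure]
      exact tsum_congr fun k => lintegral_smul_measure _ _
    have hGmono : Monotone fun i : ℕ => sumLaw μ (i + 1) {x | t < x} :=
      monotone_nat_of_le_succ fun n => S12.G_mono μ hsupp (n + 1) t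
    have hGfin : ∀ i : ℕ, sumLaw μ (i + 1) {x | t < x} ≠ ⊤ := fun i => by
      haveI := S12.sumLaw_prob μ (i + 1)
      exact measure_ne_top _ _
    calc S12.J σ t = ∑' k, ν {k} * S12.A μ t k := hJσ
      _ ≤ ∑' k, ν {k} * (m' * ∑ i ∈ Finset.range k, sumLaw μ (i + 1) {x | t < x}) :=
          ENNReal.tsum_le_tsum fun k =>
            mul_le_mul_right (S12.A_bound μ hsupp hmtop hJX ht k) _
      _ = m' * ∑' k, ν {k} * ∑ i ∈ Finset.range k, sumLaw μ (i + 1) {x | t < x} := by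
          rw [← ENNReal.tsum_mul_left]
          exact tsum_congr fun k => by ring
      _ = m' * ∑' i, ν (Set.Ioi i) * sumLaw μ (i + 1) {x | t < x} := by
          rw [S12.tsum_exchange (fun k => ν {k}) (fun i => sumLaw μ (i + 1) {x | t < x})
            (fun i => ν (Set.Ioi i)) (fun i => S12.nu_Ioi ν i)]
      _ ≤ m' * (Λ * ∑' i, ν {i + 1} * sumLaw μ (i + 1) {x | t < x}) :=
          mul_le_mul_right (S12.abel ν hL0 hL _ hGmono hGfin) _
      _ = m' * (Λ * ∑' k, ν {k} * sumLaw μ k {x | t < x}) := by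
          rw [← S12.tsum_shift (fun k => ν {k} * sumLaw μ k {x | t < x}) (by simp [hL0])]
      _ = σ {x | t < x} * (Λ * m') := by rw [hTail]; ring
  · -- t < 0
    push_neg at ht
    have h1 : (1 : ENNReal) ≤ σ {x | t < x} := by
      have hu : (Set.univ : Set ℝ) ⊆ Set.Iic t ∪ {x | t < x} := fun x _ => by
        by_cases h : t < x
        · exact Or.inr h
        · exact Or.inl (le_of_not_gt h)
      have h2 : σ (Set.Iic t) = 0 :=
        measure_mono_null (fun x hx => lt_of_le_of_lt hx ht) hσsupp
      calc (1 : ENNReal) = σ Set.univ := measure_univ.symm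
        _ ≤ σ (Set.Iic t ∪ {x | t < x}) := measure_mono hu
        _ ≤ σ (Set.Iic t) + σ {x | t < x} := measure_union_le _ _
        _ = σ {x | t < x} := by rw [h2, zero_add]
    calc S12.J σ t ≤ ∫⁻ x, ENNReal.ofReal x ∂σ := S12.J_le σ t
      _ = Λ * m' := hσlint
      _ = 1 * (Λ * m') := (one_mul _).symm
      _ ≤ σ {x | t < x} * (Λ * m') := mul_le_mul_left h1 _
end
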